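/- arXiv:1209.2859 — 3 statements merged into one kernel-verified Lean document; each statement's English description precedes it below -/
import Mathlib

section
/- Define m(ν) := Σ_{j=1}^{L₁+l₂} 1/γ_j(ν) (which, by the Karlin–McGregor/Keilson theorem, equals the mean transition time E T_{−L₁, l₂}(ν) of the bipartite chain from state −L₁ to the absorbing state l₂). Then lim_{ν→∞} γ_1(ν)·m(ν) = 1, and lim_{ν→∞} γ_i(ν)·m(ν) = ∞ for every i = 2, …, L₁+l₂. -/
open Filter Matrix Polynomial

/-- The `(L₁+l₂)×(L₁+l₂)` matrix `B(ν)`: the negative of the generator,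
restricted to the transient states `{−L₁,…,−1,0,1,…,l₂−1}`, of the bipartite
birth–death chain on `{−L₁,…,L₂}` with rates `q(l,l+1) = |l|` for `l < 0`,
`q(l,l+1) = (L₂−l)ν` for `l ≥ 0`, `q(l,l−1) = (L₁−|l|)ν` for `l ≤ 0`,
`q(l,l−1) = l` for `l > 0`, in which state `l₂` is made absorbing.
Index `i : Fin (L₁ + l₂)` represents the state `s = i − L₁ ∈ {−L₁,…,l₂−1}`. -/
noncomputable def bipAbsorbMat (L₁ L₂ l₂ : ℕ) (ν : ℝ) :
    Matrix (Fin (L₁ + l₂)) (Fin (L₁ + l₂)) ℝ :=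
  Matrix.of fun i j =>
    let s : ℤ := (i : ℕ) - (L₁ : ℤ)
    let t : ℤ := (j : ℕ) - (L₁ : ℤ)
    if s < 0 then
      if t = s then ((L₁ : ℝ) - (s.natAbs : ℝ)) * ν + (s.natAbs : ℝ)
      else if t = s + 1 then -((s.natAbs : ℝ))
      else if t = s - 1 then -(((L₁ : ℝ) - (s.natAbs : ℝ)) * ν)
      else 0
    else if s = 0 then
      if t = 0 then ((L₁ : ℝ) + (L₂ : ℝ)) * ν
      else if t = -1 then -((L₁ : ℝ) * ν)
      else if t = 1 then -((L₂ : ℝ) * ν)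
      else 0
    else
      if t = s then ((L₂ : ℝ) - (s : ℝ)) * ν + (s : ℝ)
      else if t = s - 1 then -((s : ℤ) : ℝ)
      else if t = s + 1 then -(((L₂ : ℝ) - (s : ℝ)) * ν)
      else 0

namespace BipAux

/-- coefficient of ν in `bipAbsorbMat`. -/
noncomputable def Cmat (L₁ L₂ l₂ : ℕ) : Matrix (Fin (L₁ + l₂)) (Fin (L₁ + l₂)) ℝ :=
  Matrix.of fun i j =>
    if ((i : ℕ) : ℤ) - (L₁ : ℤ) < 0 then
      if ((j : ℕ) : ℤ) - (L₁ : ℤ) = ((i : ℕ) : ℤ) - (L₁ : ℤ) then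
        ((L₁ : ℝ) - ((((i : ℕ) : ℤ) - (L₁ : ℤ)).natAbs : ℝ))
      else if ((j : ℕ) : ℤ) - (L₁ : ℤ) = ((i : ℕ) : ℤ) - (L₁ : ℤ) - 1 then
        -((L₁ : ℝ) - ((((i : ℕ) : ℤ) - (L₁ : ℤ)).natAbs : ℝ))
      else 0
    else if ((i : ℕ) : ℤ) - (L₁ : ℤ) = 0 then
      if ((j : ℕ) : ℤ) - (L₁ : ℤ) = 0 then ((L₁ : ℝ) + (L₂ : ℝ))
      else if ((j : ℕ) : ℤ) - (L₁ : ℤ) = -1 then -(L₁ : ℝ)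
      else if ((j : ℕ) : ℤ) - (L₁ : ℤ) = 1 then -(L₂ : ℝ)
      else 0
    else
      if ((j : ℕ) : ℤ) - (L₁ : ℤ) = ((i : ℕ) : ℤ) - (L₁ : ℤ) then
        ((L₂ : ℝ) - (((((i : ℕ) : ℤ) - (L₁ : ℤ)) : ℤ) : ℝ))
      else if ((j : ℕ) : ℤ) - (L₁ : ℤ) = ((i : ℕ) : ℤ) - (L₁ : ℤ) + 1 then
        -((L₂ : ℝ) - (((((i : ℕ) : ℤ) - (L₁ : ℤ)) : ℤ) : ℝ))
      else 0

/-- constant coefficient of `bipAbsorbMat`. -/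
noncomputable def Dmat (L₁ L₂ l₂ : ℕ) : Matrix (Fin (L₁ + l₂)) (Fin (L₁ + l₂)) ℝ :=
  Matrix.of fun i j =>
    if ((i : ℕ) : ℤ) - (L₁ : ℤ) < 0 then
      if ((j : ℕ) : ℤ) - (L₁ : ℤ) = ((i : ℕ) : ℤ) - (L₁ : ℤ) then
        (((((i : ℕ) : ℤ) - (L₁ : ℤ)).natAbs : ℕ) : ℝ)
      else if ((j : ℕ) : ℤ) - (L₁ : ℤ) = ((i : ℕ) : ℤ) - (L₁ : ℤ) + 1 then
        -(((((i : ℕ) : ℤ) - (L₁ : ℤ)).natAbs : ℝ))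
      else 0
    else if ((i : ℕ) : ℤ) - (L₁ : ℤ) = 0 then 0
    else
      if ((j : ℕ) : ℤ) - (L₁ : ℤ) = ((i : ℕ) : ℤ) - (L₁ : ℤ) then
        (((((i : ℕ) : ℤ) - (L₁ : ℤ)) : ℤ) : ℝ)
      else if ((j : ℕ) : ℤ) - (L₁ : ℤ) = ((i : ℕ) : ℤ) - (L₁ : ℤ) - 1 then
        -(((((i : ℕ) : ℤ) - (L₁ : ℤ)) : ℤ) : ℝ)
      else 0

theorem bip_decomp (L₁ L₂ l₂ : ℕ) (ν : ℝ) :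
    bipAbsorbMat L₁ L₂ l₂ ν = ν • Cmat L₁ L₂ l₂ + Dmat L₁ L₂ l₂ := by
  ext i j
  simp only [bipAbsorbMat, Cmat, Dmat, Matrix.of_apply, Matrix.add_apply, Matrix.smul_apply,
    smul_eq_mul]
  split_ifs
  all_goals first | (exfalso; omega) | ring


/-- The rescaled shifted matrix whose determinant captures `det (t•1 + B ν) / ν^(n-1)`. -/
noncomputable def Amat (L₁ L₂ l₂ : ℕ) (t ε : ℝ) :
    Matrix (Fin (L₁ + l₂)) (Fin (L₁ + l₂)) ℝ :=
  Matrix.of fun i j =>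
    if (i : ℕ) = 0 then Dmat L₁ L₂ l₂ i j + t * (if i = j then 1 else 0)
    else Cmat L₁ L₂ l₂ i j + ε * (Dmat L₁ L₂ l₂ i j + t * (if i = j then 1 else 0))

/-- The second rescaled matrix, capturing `det (ν•1 + B ν) / ν^n`. -/
noncomputable def A2mat (L₁ L₂ l₂ : ℕ) (ε : ℝ) :
    Matrix (Fin (L₁ + l₂)) (Fin (L₁ + l₂)) ℝ :=
  (1 : Matrix (Fin (L₁ + l₂)) (Fin (L₁ + l₂)) ℝ) + Cmat L₁ L₂ l₂ + ε • Dmat L₁ L₂ l₂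

theorem Crow0 {L₁ L₂ l₂ : ℕ} (i j : Fin (L₁ + l₂)) (h : (i : ℕ) = 0) (hL₁ : 1 ≤ L₁) :
    Cmat L₁ L₂ l₂ i j = 0 := by
  have hi : (((i : ℕ) : ℤ) - (L₁ : ℤ)).natAbs = L₁ := by omega
  simp only [Cmat, Matrix.of_apply, hi]
  split_ifs <;> first | (exfalso; omega) | push_cast [hi] ; ring

theorem scale_det {L₁ L₂ l₂ : ℕ} (hL₁ : 1 ≤ L₁) {ν : ℝ} (hν : 0 < ν) (t : ℝ) :
    Matrix.det (t • (1 : Matrix (Fin (L₁ + l₂)) (Fin (L₁ + l₂)) ℝ) + bipAbsorbMat L₁ L₂ l₂ ν)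
      = ν ^ (L₁ + l₂ - 1) * Matrix.det (Amat L₁ L₂ l₂ t (1 / ν)) := by
  have h0 : (0 : ℕ) < L₁ + l₂ := by omega
  set j0 : Fin (L₁ + l₂) := ⟨0, h0⟩ with hj0
  have key : (t • (1 : Matrix (Fin (L₁ + l₂)) (Fin (L₁ + l₂)) ℝ) + bipAbsorbMat L₁ L₂ l₂ ν)
      = Matrix.of fun i j : Fin (L₁ + l₂) => (if (i : ℕ) = 0 then (1:ℝ) else ν) * Amat L₁ L₂ l₂ t (1 / ν) i j := by
    rw [bip_decomp]
    ext i j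
    by_cases h : (i : ℕ) = 0
    · simp only [Matrix.of_apply, Amat, h, if_true, Matrix.add_apply, Matrix.smul_apply,
        Matrix.one_apply, smul_eq_mul, Crow0 i j h hL₁, one_mul]
      ring
    · simp only [Matrix.of_apply, Amat, h, if_false, Matrix.add_apply, Matrix.smul_apply,
        Matrix.one_apply, smul_eq_mul]
      field_simp
      ring
  rw [key, Matrix.det_mul_column]
  congr 1
  rw [← Finset.prod_erase_mul _ _ (Finset.mem_univ j0)]
  have h1 : ∀ i ∈ Finset.univ.erase j0, (if (i : ℕ) = 0 then (1:ℝ) else ν) = ν := by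
    intro i hi
    rw [if_neg]
    intro hh
    exact (Finset.mem_erase.mp hi).1 (Fin.ext (by simp [hh, hj0]))
  rw [Finset.prod_congr rfl h1, Finset.prod_const, if_pos rfl, mul_one,
    Finset.card_erase_of_mem (Finset.mem_univ j0), Finset.card_univ, Fintype.card_fin]

theorem scale_det2 {L₁ L₂ l₂ : ℕ} {ν : ℝ} (hν : 0 < ν) :
    Matrix.det (ν • (1 : Matrix (Fin (L₁ + l₂)) (Fin (L₁ + l₂)) ℝ) + bipAbsorbMat L₁ L₂ l₂ ν)
      = ν ^ (L₁ + l₂) * Matrix.det (A2mat L₁ L₂ l₂ (1 / ν)) := by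
  have key : A2mat L₁ L₂ l₂ (1 / ν)
      = (1/ν) • (ν • (1 : Matrix (Fin (L₁ + l₂)) (Fin (L₁ + l₂)) ℝ) + bipAbsorbMat L₁ L₂ l₂ ν) := by
    rw [bip_decomp, A2mat]
    ext i j
    simp only [Matrix.add_apply, Matrix.smul_apply, smul_eq_mul]
    field_simp
    ring
  rw [key, Matrix.det_smul, Fintype.card_fin]
  field_simp
  rw [mul_assoc, ← mul_pow, mul_one_div_cancel hν.ne', one_pow, mul_one]

theorem tendsto_Amat (L₁ L₂ l₂ : ℕ) (t : ℝ) :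
    Tendsto (fun ν : ℝ => Matrix.det (Amat L₁ L₂ l₂ t (1 / ν))) atTop
      (nhds (Matrix.det (Amat L₁ L₂ l₂ t 0))) := by
  have hc : Continuous fun ε : ℝ => Matrix.det (Amat L₁ L₂ l₂ t ε) := by
    apply Continuous.matrix_det
    apply continuous_matrix
    intro i j
    by_cases h : (i : ℕ) = 0 <;> simp only [Amat, Matrix.of_apply, h, if_true, if_false] <;> fun_prop
  have h0 : Tendsto (fun ν : ℝ => 1 / ν) atTop (nhds 0) := by
    simpa only [one_div] using (tendsto_inv_atTop_zero : Tendsto (fun r : ℝ => r⁻¹) atTop (nhds 0))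
  exact (hc.tendsto 0).comp h0

theorem tendsto_A2mat (L₁ L₂ l₂ : ℕ) :
    Tendsto (fun ν : ℝ => Matrix.det (A2mat L₁ L₂ l₂ (1 / ν))) atTop
      (nhds (Matrix.det (A2mat L₁ L₂ l₂ 0))) := by
  have hc : Continuous fun ε : ℝ => Matrix.det (A2mat L₁ L₂ l₂ ε) := by
    apply Continuous.matrix_det
    apply continuous_matrix
    intro i j
    simp only [A2mat, Matrix.add_apply, Matrix.smul_apply, smul_eq_mul]
    fun_prop
  have h0 : Tendsto (fun ν : ℝ => 1 / ν) atTop (nhds 0) := by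
    simpa only [one_div] using (tendsto_inv_atTop_zero : Tendsto (fun r : ℝ => r⁻¹) atTop (nhds 0))
  exact (hc.tendsto 0).comp h0


/-- The limiting "cofactor" matrix: row 0 replaced by the standard basis vector `e₀`,
other rows from `Cmat`. -/
noncomputable def Umat (L₁ L₂ l₂ : ℕ) : Matrix (Fin (L₁ + l₂)) (Fin (L₁ + l₂)) ℝ :=
  Matrix.of fun i j : Fin (L₁ + l₂) =>
    if (i : ℕ) = 0 then (if (j : ℕ) = 0 then 1 else 0) else Cmat L₁ L₂ l₂ i j

/-- the grading making `Umat` triangular -/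
def bval (L₁ l₂ : ℕ) (i : Fin (L₁ + l₂)) : ℕ :=
  if (i : ℕ) < L₁ then (i : ℕ) else 2 * L₁ + l₂ - 1 - (i : ℕ)

theorem Umat_zero {L₁ L₂ l₂ : ℕ} (hL₁ : 1 ≤ L₁) (a b : Fin (L₁ + l₂))
    (h : bval L₁ l₂ a < bval L₁ l₂ b) : Umat L₁ L₂ l₂ a b = 0 := by
  have ha := a.isLt
  have hb := b.isLt
  simp only [bval] at h
  simp only [Umat, Cmat, Matrix.of_apply]
  split_ifs at h ⊢ <;> first | rfl | (exfalso; omega)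

/-- the triangularizing involution -/
def flipE (L₁ l₂ : ℕ) : Fin (L₁ + l₂) → Fin (L₁ + l₂) := fun i =>
  if h : (i : ℕ) < L₁ then i else ⟨2 * L₁ + l₂ - 1 - (i : ℕ), by omega⟩

theorem flipE_involutive (L₁ l₂ : ℕ) : Function.Involutive (flipE L₁ l₂) := by
  intro i
  have hi := i.isLt
  by_cases h : (i : ℕ) < L₁
  · simp only [flipE, dif_pos h]
  · have h2 : ¬ ((⟨2 * L₁ + l₂ - 1 - (i : ℕ), by omega⟩ : Fin (L₁ + l₂)) : ℕ) < L₁ := by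
      change ¬ 2 * L₁ + l₂ - 1 - (i : ℕ) < L₁
      omega
    simp only [flipE, dif_neg h, dif_neg h2]
    exact Fin.ext (by simp; omega)

theorem bval_flipE (L₁ l₂ : ℕ) (k : Fin (L₁ + l₂)) : bval L₁ l₂ (flipE L₁ l₂ k) = (k : ℕ) := by
  have hk := k.isLt
  by_cases h : (k : ℕ) < L₁
  · simp only [flipE, dif_pos h, bval, if_pos h]
  · have h2 : ¬ (2 * L₁ + l₂ - 1 - (k : ℕ)) < L₁ := by omega
    simp only [flipE, dif_neg h, bval]
    rw [if_neg h2]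
    omega

theorem Umat_diag_pos {L₁ L₂ l₂ : ℕ} (hL₁ : 1 ≤ L₁) (hl₂ : 1 ≤ l₂) (hl₂L₂ : l₂ ≤ L₂)
    (i : Fin (L₁ + l₂)) : 0 < Umat L₁ L₂ l₂ i i := by
  have hi := i.isLt
  by_cases h0 : (i : ℕ) = 0
  · simp only [Umat, Matrix.of_apply, h0, if_true]
    norm_num
  · simp only [Umat, Matrix.of_apply, h0, if_false, Cmat]
    by_cases h1 : ((i : ℕ) : ℤ) - (L₁ : ℤ) < 0
    · rw [if_pos h1, if_pos trivial]
      have hn : ((((i : ℕ) : ℤ) - (L₁ : ℤ)).natAbs) = L₁ - (i : ℕ) := by omega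
      rw [hn]
      have hc : ((L₁ - (i : ℕ) : ℕ) : ℝ) = (L₁ : ℝ) - ((i : ℕ) : ℝ) := by
        push_cast [Nat.cast_sub (by omega : (i : ℕ) ≤ L₁)]
        ring
      rw [hc]
      have : (1 : ℝ) ≤ ((i : ℕ) : ℝ) := by exact_mod_cast Nat.one_le_iff_ne_zero.mpr h0
      linarith
    · by_cases h2 : ((i : ℕ) : ℤ) - (L₁ : ℤ) = 0
      · rw [if_neg h1, if_pos h2, if_pos h2]
        have : (1:ℝ) ≤ (L₁:ℝ) := by exact_mod_cast hL₁
        have : (1:ℝ) ≤ (L₂:ℝ) := by exact_mod_cast le_trans hl₂ hl₂L₂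
        linarith
      · rw [if_neg h1, if_neg h2, if_pos trivial]
        have hlt : ((i : ℕ) : ℤ) - (L₁ : ℤ) ≤ (L₂ : ℤ) - 1 := by omega
        have : ((((i : ℕ) : ℤ) - (L₁ : ℤ) : ℤ) : ℝ) ≤ (L₂ : ℝ) - 1 := by
          exact_mod_cast hlt
        linarith

theorem Umat_det_pos {L₁ L₂ l₂ : ℕ} (hL₁ : 1 ≤ L₁) (hl₂ : 1 ≤ l₂) (hl₂L₂ : l₂ ≤ L₂) :
    0 < Matrix.det (Umat L₁ L₂ l₂) := by
  set e : Equiv.Perm (Fin (L₁ + l₂)) := (flipE_involutive L₁ l₂).toPerm with he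
  have hdet : Matrix.det ((Umat L₁ L₂ l₂).submatrix e e) = Matrix.det (Umat L₁ L₂ l₂) :=
    Matrix.det_submatrix_equiv_self e _
  have htri : ((Umat L₁ L₂ l₂).submatrix e e).BlockTriangular OrderDual.toDual := by
    intro i j hij
    have hij' : i < j := hij
    apply Umat_zero hL₁
    have hb : ∀ k : Fin (L₁ + l₂), bval L₁ l₂ (e k) = (k : ℕ) := fun k => bval_flipE L₁ l₂ k
    rw [hb, hb]
    exact hij'
  rw [← hdet, Matrix.det_of_lowerTriangular _ htri]
  apply Finset.prod_pos
  intro k _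
  simpa only [Matrix.submatrix_apply] using Umat_diag_pos hL₁ hl₂ hl₂L₂ (e k)

theorem Amat_one_det {L₁ L₂ l₂ : ℕ} (hL₁ : 1 ≤ L₁) :
    Matrix.det (Amat L₁ L₂ l₂ 1 0)
      = Matrix.det (Amat L₁ L₂ l₂ 0 0) + Matrix.det (Umat L₁ L₂ l₂) := by
  have h0 : (0 : ℕ) < L₁ + l₂ := by omega
  set j0 : Fin (L₁ + l₂) := ⟨0, h0⟩ with hj0
  have key : Amat L₁ L₂ l₂ 1 0 = Matrix.updateRow (Amat L₁ L₂ l₂ 0 0) j0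
      ((fun j => Amat L₁ L₂ l₂ 0 0 j0 j) + (fun j : Fin (L₁ + l₂) => if (j : ℕ) = 0 then (1:ℝ) else 0)) := by
    ext i j
    by_cases h : i = j0
    · rw [h, Matrix.updateRow_self, Pi.add_apply]
      simp only [Amat, Matrix.of_apply, Fin.ext_iff]
      norm_num
      split_ifs
      all_goals first | (exfalso; omega) | ring
    · rw [Matrix.updateRow_ne h]
      have h' : ¬ ((i : ℕ) = 0) := fun hh => h (Fin.ext (by simp [hj0, hh]))
      simp only [Amat, Matrix.of_apply, if_neg h']
      ring
  rw [key, Matrix.det_updateRow_add]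
  congr 1
  · congr 1
    exact Matrix.updateRow_eq_self _ _
  · congr 1
    ext i j
    by_cases h : i = j0
    · rw [h, Matrix.updateRow_self]
      simp only [Umat, Matrix.of_apply, Fin.ext_iff]
      norm_num
    · rw [Matrix.updateRow_ne h]
      have h' : ¬ ((i : ℕ) = 0) := fun hh => h (Fin.ext (by simp [hj0, hh]))
      simp only [Amat, Umat, Matrix.of_apply, if_neg h']
      ring


theorem eval_charpoly' {n : ℕ} (M : Matrix (Fin n) (Fin n) ℝ) (x : ℝ) :
    M.charpoly.eval x = Matrix.det (x • (1 : Matrix (Fin n) (Fin n) ℝ) - M) := by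
  have h1 : ((Matrix.charmatrix M).map (Polynomial.evalRingHom x)).det
      = Matrix.det (x • (1 : Matrix (Fin n) (Fin n) ℝ) - M) := by
    congr 1
    ext i j
    by_cases h : i = j
    · subst h
      simp [Matrix.charmatrix_apply_eq, Matrix.one_apply]
    · simp [Matrix.charmatrix_apply_ne _ _ _ h, Matrix.one_apply_ne h, Matrix.sub_apply,
        Matrix.smul_apply, h]
  rw [Matrix.charpoly, ← h1, ← RingHom.mapMatrix_apply, ← RingHom.map_det]
  rfl

theorem root_of_spec {n : ℕ} (M : Matrix (Fin n) (Fin n) ℝ) (x : ℝ) (hx : x ∈ spectrum ℝ M) :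
    M.charpoly.eval x = 0 := by
  rw [eval_charpoly']
  rw [spectrum.mem_iff, Matrix.isUnit_iff_isUnit_det,
    (Algebra.algebraMap_eq_smul_one x : algebraMap ℝ (Matrix (Fin n) (Fin n) ℝ) x = x • 1)] at hx
  exact not_not.mp (fun hne => hx (isUnit_iff_ne_zero.mpr hne))

theorem charpoly_factor {n : ℕ} (M : Matrix (Fin n) (Fin n) ℝ)
    (γ : Fin n → ℝ) (hinj : Function.Injective γ) (hspec : ∀ j, γ j ∈ spectrum ℝ M) :
    M.charpoly = ∏ j : Fin n, (X - C (γ j)) := by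
  set p := M.charpoly with hp
  set q := ∏ j : Fin n, (X - C (γ j)) with hq
  have hqm : q.Monic := Polynomial.monic_prod_of_monic _ _ (fun j _ => Polynomial.monic_X_sub_C _)
  have hqd : q.natDegree = n := by
    rw [hq, Polynomial.natDegree_prod _ _ (fun j _ => Polynomial.X_sub_C_ne_zero _)]
    simp
  have hpm : p.Monic := Matrix.charpoly_monic M
  have hpd : p.natDegree = n := by
    rw [hp, Matrix.charpoly_natDegree_eq_dim, Fintype.card_fin]
  have heval : ∀ j, (p - q).eval (γ j) = 0 := by
    intro j
    rw [Polynomial.eval_sub, root_of_spec M _ (hspec j)]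
    have hqe : q.eval (γ j) = 0 := by
      rw [hq, Polynomial.eval_prod]
      apply Finset.prod_eq_zero (Finset.mem_univ j)
      simp
    rw [hqe]; ring
  by_cases hz : p - q = 0
  · exact sub_eq_zero.mp hz
  · exfalso
    have hp0 : p ≠ 0 := hpm.ne_zero
    have hdeg : (p - q).degree < (n : ℕ) := by
      have hd : p.degree = q.degree := by
        rw [Polynomial.degree_eq_natDegree hp0, Polynomial.degree_eq_natDegree hqm.ne_zero,
          hpd, hqd]
      have hlc : p.leadingCoeff = q.leadingCoeff := by
        rw [hpm.leadingCoeff, hqm.leadingCoeff]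
      have h := Polynomial.degree_sub_lt hd hp0 hlc
      rw [Polynomial.degree_eq_natDegree hp0, hpd] at h
      exact h
    have hdeg' : (p - q).natDegree < Fintype.card (Fin n) := by
      rw [Fintype.card_fin]
      exact (Polynomial.natDegree_lt_iff_degree_lt hz).mpr hdeg
    exact hz (Polynomial.eq_zero_of_natDegree_lt_card_of_eval_eq_zero _ hinj heval hdeg')

theorem det_add_eq_prod {n : ℕ} (M : Matrix (Fin n) (Fin n) ℝ) (γ : Fin n → ℝ)
    (hfac : M.charpoly = ∏ j : Fin n, (X - C (γ j))) (t : ℝ) :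
    Matrix.det (t • (1 : Matrix (Fin n) (Fin n) ℝ) + M) = ∏ j, (t + γ j) := by
  have h1 : t • (1 : Matrix (Fin n) (Fin n) ℝ) + M = -((-t) • 1 - M) := by
    rw [neg_smul, neg_sub, sub_neg_eq_add, add_comm]
  rw [h1, Matrix.det_neg, ← eval_charpoly', hfac, Polynomial.eval_prod]
  simp only [Polynomial.eval_sub, Polynomial.eval_X, Polynomial.eval_C, Fintype.card_fin]
  have h2 : ∀ j : Fin n, -t - γ j = (-1) * (t + γ j) := fun j => by ring
  rw [Finset.prod_congr rfl (fun j _ => h2 j), Finset.prod_mul_distrib, Finset.prod_const,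
    Finset.card_univ, Fintype.card_fin, ← mul_assoc, ← mul_pow]
  norm_num

end BipAux


set_option maxHeartbeats 2000000 in
/-- Let `0 < γ_1(ν) < ⋯ < γ_{L₁+l₂}(ν)` denote the (real, distinct, strictly
positive) eigenvalues of `B(ν)`, for `ν > 0`, and let
`m(ν) := Σ_{j=1}^{L₁+l₂} 1/γ_j(ν)` (the mean transition time
`E T_{−L₁,l₂}(ν)` of the bipartite chain from `−L₁` to the absorbing state
`l₂`).  Then `lim_{ν→∞} γ_1(ν)·m(ν) = 1` and `lim_{ν→∞} γ_i(ν)·m(ν) = ∞` for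
every `i = 2, …, L₁+l₂`. -/
theorem bipAbsorbMat_eigenvalue_meanTransition_limits (L₁ L₂ l₂ : ℕ)
    (hL₁ : 1 ≤ L₁) (hl₂ : 1 ≤ l₂) (hl₂L₂ : l₂ ≤ L₂)
    (γ : ℝ → Fin (L₁ + l₂) → ℝ)
    (hγ : ∀ ν : ℝ, 0 < ν → StrictMono (γ ν) ∧ (∀ i, 0 < γ ν i) ∧
      spectrum ℝ (bipAbsorbMat L₁ L₂ l₂ ν) = Set.range (γ ν)) :
    Tendsto
        (fun ν : ℝ => γ ν ⟨0, by omega⟩ * ∑ j : Fin (L₁ + l₂), (γ ν j)⁻¹)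
        atTop (nhds 1) ∧
      ∀ i : Fin (L₁ + l₂), 0 < (i : ℕ) →
        Tendsto (fun ν : ℝ => γ ν i * ∑ j : Fin (L₁ + l₂), (γ ν j)⁻¹)
          atTop atTop := by
  classical
  have h0n : (0:ℕ) < L₁ + l₂ := by omega
  have h1n : (1:ℕ) < L₁ + l₂ := by omega
  set j0 : Fin (L₁ + l₂) := ⟨0, h0n⟩ with hj0
  set j1 : Fin (L₁ + l₂) := ⟨1, h1n⟩ with hj1
  have hj01 : j0 ≠ j1 := by
    intro h
    have := congrArg Fin.val h
    simp [hj0, hj1] at this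
  -- the product formula for det (t•1 + B ν)
  have hfac : ∀ ν : ℝ, 0 < ν → ∀ t : ℝ,
      Matrix.det (t • (1 : Matrix (Fin (L₁ + l₂)) (Fin (L₁ + l₂)) ℝ) + bipAbsorbMat L₁ L₂ l₂ ν)
        = ∏ j, (t + γ ν j) := by
    intro ν hν t
    apply BipAux.det_add_eq_prod
    apply BipAux.charpoly_factor _ _ (hγ ν hν).1.injective
    intro j
    rw [(hγ ν hν).2.2]
    exact Set.mem_range_self j
  -- limits
  set W0 : ℝ := Matrix.det (BipAux.Amat L₁ L₂ l₂ 0 0) with hW0def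
  set a : ℝ := Matrix.det (BipAux.Umat L₁ L₂ l₂) with hadef
  set W2 : ℝ := Matrix.det (BipAux.A2mat L₁ L₂ l₂ 0) with hW2def
  have ha : 0 < a := BipAux.Umat_det_pos hL₁ hl₂ hl₂L₂
  have lim0 := BipAux.tendsto_Amat L₁ L₂ l₂ 0
  have lim1 := BipAux.tendsto_Amat L₁ L₂ l₂ 1
  have lim2 := BipAux.tendsto_A2mat L₁ L₂ l₂
  have limdiff : Tendsto (fun ν : ℝ => Matrix.det (BipAux.Amat L₁ L₂ l₂ 1 (1/ν))
      - Matrix.det (BipAux.Amat L₁ L₂ l₂ 0 (1/ν))) atTop (nhds a) := by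
    have h := lim1.sub lim0
    rwa [BipAux.Amat_one_det hL₁, ← hW0def, ← hadef, add_sub_cancel_left] at h
  have hev1 : ∀ᶠ ν : ℝ in atTop, Matrix.det (BipAux.Amat L₁ L₂ l₂ 0 (1/ν)) < W0 + 1 :=
    lim0.eventually_lt_const (lt_add_one W0)
  have hev2 : ∀ᶠ ν : ℝ in atTop, a/2 < Matrix.det (BipAux.Amat L₁ L₂ l₂ 1 (1/ν))
      - Matrix.det (BipAux.Amat L₁ L₂ l₂ 0 (1/ν)) :=
    limdiff.eventually_const_lt (by linarith)
  have hev3 : ∀ᶠ ν : ℝ in atTop, Matrix.det (BipAux.A2mat L₁ L₂ l₂ (1/ν)) < W2 + 1 :=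
    lim2.eventually_lt_const (lt_add_one W2)
  -- nonnegativity of the limits
  have hposA0 : ∀ᶠ ν : ℝ in atTop, 0 ≤ Matrix.det (BipAux.Amat L₁ L₂ l₂ 0 (1/ν)) := by
    filter_upwards [eventually_gt_atTop (0:ℝ)] with ν hν
    have h := BipAux.scale_det (L₂ := L₂) (l₂ := l₂) hL₁ hν 0
    rw [hfac ν hν 0] at h
    have hprod : 0 < ∏ j, ((0:ℝ) + γ ν j) :=
      Finset.prod_pos fun j _ => by simpa using (hγ ν hν).2.1 j
    have h2 : 0 < ν ^ (L₁ + l₂ - 1) * Matrix.det (BipAux.Amat L₁ L₂ l₂ 0 (1/ν)) := by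
      rw [← h]; exact hprod
    rcases mul_pos_iff.mp h2 with ⟨_, hy⟩ | ⟨hx, _⟩
    · exact hy.le
    · exact absurd (pow_pos hν (L₁ + l₂ - 1)) (by linarith)
  have hposA2 : ∀ᶠ ν : ℝ in atTop, 0 ≤ Matrix.det (BipAux.A2mat L₁ L₂ l₂ (1/ν)) := by
    filter_upwards [eventually_gt_atTop (0:ℝ)] with ν hν
    have h := BipAux.scale_det2 (L₁ := L₁) (L₂ := L₂) (l₂ := l₂) hν
    rw [hfac ν hν ν] at h
    have hprod : 0 < ∏ j, (ν + γ ν j) :=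
      Finset.prod_pos fun j _ => by have := (hγ ν hν).2.1 j; linarith
    have h2 : 0 < ν ^ (L₁ + l₂) * Matrix.det (BipAux.A2mat L₁ L₂ l₂ (1/ν)) := by
      rw [← h]; exact hprod
    rcases mul_pos_iff.mp h2 with ⟨_, hy⟩ | ⟨hx, _⟩
    · exact hy.le
    · exact absurd (pow_pos hν (L₁ + l₂)) (by linarith)
  have hW0nn : 0 ≤ W0 := ge_of_tendsto lim0 hposA0
  have hW2nn : 0 ≤ W2 := ge_of_tendsto lim2 hposA2
  have hW0p : (0:ℝ) < W0 + 1 := by linarith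
  have hW2p : (0:ℝ) < W2 + 1 := by linarith
  set N : ℝ := 2 ^ (L₁ + l₂) with hNdef
  have hN : (0:ℝ) < N := by positivity
  set K : ℝ := 4 * N * (W0 + 1) / a with hKdef
  set c3 : ℝ := a / (4 * N * (W2 + 1)) with hc3def
  have hK : 0 < K := by rw [hKdef]; positivity
  have hc3 : 0 < c3 := by rw [hc3def]; positivity
  -- the main eventual estimate
  have main : ∀ᶠ ν : ℝ in atTop,
      (1 ≤ γ ν j0 * ∑ j, (γ ν j)⁻¹ ∧
        γ ν j0 * ∑ j, (γ ν j)⁻¹ ≤ 1 + (K * (L₁ + l₂) / c3) * ν⁻¹) ∧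
      ∀ i : Fin (L₁ + l₂), 0 < (i : ℕ) → (c3 / K) * ν ≤ γ ν i * ∑ j, (γ ν j)⁻¹ := by
    filter_upwards [hev1, hev2, hev3, eventually_ge_atTop (1:ℝ),
      eventually_ge_atTop (4 * N * (W2 + 1) / a)] with ν h1 h2 h3 hν1 hνR
    have hν : (0:ℝ) < ν := by linarith
    have hp1 : (0:ℝ) < ν ^ (L₁ + l₂ - 1) := pow_pos hν _
    have hp2 : (0:ℝ) < ν ^ (L₁ + l₂ - 2) := pow_pos hν _
    have hpn : (0:ℝ) < ν ^ (L₁ + l₂) := pow_pos hν _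
    have hpow1 : ν ^ (L₁ + l₂ - 1) = ν ^ (L₁ + l₂ - 2) * ν := by
      rw [← pow_succ]
      congr 1
      omega
    have hpown : ν ^ (L₁ + l₂) = ν ^ (L₁ + l₂ - 2) * ν ^ 2 := by
      rw [← pow_add]
      congr 1
      omega
    have hσ : ∀ j, 0 < γ ν j := (hγ ν hν).2.1
    have hmono := (hγ ν hν).1
    -- the three determinant quantities
    have e0 : (∏ j, ((0:ℝ) + γ ν j))
        = ν ^ (L₁ + l₂ - 1) * Matrix.det (BipAux.Amat L₁ L₂ l₂ 0 (1/ν)) := by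
      rw [← hfac ν hν 0, BipAux.scale_det hL₁ hν 0]
    have e1 : (∏ j, ((1:ℝ) + γ ν j))
        = ν ^ (L₁ + l₂ - 1) * Matrix.det (BipAux.Amat L₁ L₂ l₂ 1 (1/ν)) := by
      rw [← hfac ν hν 1, BipAux.scale_det hL₁ hν 1]
    have e2 : (∏ j, (ν + γ ν j))
        = ν ^ (L₁ + l₂) * Matrix.det (BipAux.A2mat L₁ L₂ l₂ (1/ν)) := by
      rw [← hfac ν hν ν, BipAux.scale_det2 hν]
    set PP : ℝ := ∏ j, γ ν j with hPPdef
    have hPPpos : 0 < PP := Finset.prod_pos fun j _ => hσ j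
    have hG0 : (∏ j, ((0:ℝ) + γ ν j)) = PP := by
      apply Finset.prod_congr rfl
      intro j _
      rw [zero_add]
    have hPle : PP ≤ (W0 + 1) * ν ^ (L₁ + l₂ - 1) := by
      rw [← hG0, e0]
      calc ν ^ (L₁ + l₂ - 1) * Matrix.det (BipAux.Amat L₁ L₂ l₂ 0 (1/ν))
          ≤ ν ^ (L₁ + l₂ - 1) * (W0 + 1) := mul_le_mul_of_nonneg_left h1.le hp1.le
        _ = (W0 + 1) * ν ^ (L₁ + l₂ - 1) := mul_comm _ _
    have hGν : (∏ j, (ν + γ ν j)) ≤ (W2 + 1) * ν ^ (L₁ + l₂) := by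
      rw [e2]
      calc ν ^ (L₁ + l₂) * Matrix.det (BipAux.A2mat L₁ L₂ l₂ (1/ν))
          ≤ ν ^ (L₁ + l₂) * (W2 + 1) := mul_le_mul_of_nonneg_left h3.le hpn.le
        _ = (W2 + 1) * ν ^ (L₁ + l₂) := mul_comm _ _
    have hdiffν : a/2 * ν ^ (L₁ + l₂ - 1)
        ≤ (∏ j, ((1:ℝ) + γ ν j)) - (∏ j, ((0:ℝ) + γ ν j)) := by
      rw [e0, e1]
      calc a/2 * ν ^ (L₁ + l₂ - 1) = ν ^ (L₁ + l₂ - 1) * (a/2) := mul_comm _ _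
        _ ≤ ν ^ (L₁ + l₂ - 1) * (Matrix.det (BipAux.Amat L₁ L₂ l₂ 1 (1/ν))
              - Matrix.det (BipAux.Amat L₁ L₂ l₂ 0 (1/ν))) :=
            mul_le_mul_of_nonneg_left h2.le hp1.le
        _ = ν ^ (L₁ + l₂ - 1) * Matrix.det (BipAux.Amat L₁ L₂ l₂ 1 (1/ν))
              - ν ^ (L₁ + l₂ - 1) * Matrix.det (BipAux.Amat L₁ L₂ l₂ 0 (1/ν)) := by ring
    -- subset expansion
    set F : Finset (Fin (L₁ + l₂)) → ℝ := fun T => ∏ j ∈ Finset.univ \ T, γ ν j with hFdef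
    have hFnn : ∀ T, 0 ≤ F T := fun T => Finset.prod_nonneg fun j _ => (hσ j).le
    have hprod1 : (∏ j, ((1:ℝ) + γ ν j)) = ∑ T ∈ Finset.univ.powerset, F T := by
      rw [Finset.prod_add]
      apply Finset.sum_congr rfl
      intro T _
      rw [Finset.prod_const_one, one_mul]
    have hprodν : (∏ j, (ν + γ ν j)) = ∑ T ∈ Finset.univ.powerset, ν ^ T.card * F T := by
      rw [Finset.prod_add]
      apply Finset.sum_congr rfl
      intro T _
      rw [Finset.prod_const]
    have hFempty : F ∅ = PP := by
      rw [hFdef]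
      simp [hPPdef]
    -- term bounds from the ν-expansion
    have hterm : ∀ T : Finset (Fin (L₁ + l₂)), ν ^ T.card * F T ≤ (W2 + 1) * ν ^ (L₁ + l₂) := by
      intro T
      calc ν ^ T.card * F T
          ≤ ∑ S ∈ Finset.univ.powerset, ν ^ S.card * F S := by
            apply Finset.single_le_sum (f := fun S => ν ^ S.card * F S)
            · intro S _
              exact mul_nonneg (pow_nonneg hν.le _) (hFnn S)
            · simp
        _ = ∏ j, (ν + γ ν j) := hprodν.symm
        _ ≤ (W2 + 1) * ν ^ (L₁ + l₂) := hGν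
    have hFT2 : ∀ T : Finset (Fin (L₁ + l₂)), 2 ≤ T.card →
        F T ≤ (W2 + 1) * ν ^ (L₁ + l₂ - 2) := by
      intro T hT
      have h := hterm T
      have hν2T : ν ^ 2 ≤ ν ^ T.card := pow_le_pow_right₀ hν1 hT
      have : F T * ν ^ 2 ≤ (W2 + 1) * ν ^ (L₁ + l₂ - 2) * ν ^ 2 := by
        calc F T * ν ^ 2 ≤ F T * ν ^ T.card :=
              mul_le_mul_of_nonneg_left hν2T (hFnn T)
          _ = ν ^ T.card * F T := by ring
          _ ≤ (W2 + 1) * ν ^ (L₁ + l₂) := h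
          _ = (W2 + 1) * ν ^ (L₁ + l₂ - 2) * ν ^ 2 := by rw [hpown]; ring
      exact le_of_mul_le_mul_right this (by positivity)
    -- split of the t = 1 expansion
    set E1 : ℝ := ∑ T ∈ Finset.univ.powerset.filter (fun T => T.card = 1), F T with hE1def
    set tail : ℝ := ∑ T ∈ Finset.univ.powerset.filter (fun T => 2 ≤ T.card), F T with htaildef
    have hsplit : (∏ j, ((1:ℝ) + γ ν j)) = PP + E1 + tail := by
      rw [hprod1, ← Finset.sum_filter_add_sum_filter_not Finset.univ.powerset
        (fun T => T.card = 0) F]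
      have hzero : Finset.univ.powerset.filter
          (fun T : Finset (Fin (L₁ + l₂)) => T.card = 0) = {∅} := by
        ext T
        simp [Finset.card_eq_zero]
      rw [hzero, Finset.sum_singleton, hFempty,
        ← Finset.sum_filter_add_sum_filter_not (Finset.univ.powerset.filter
          (fun T : Finset (Fin (L₁ + l₂)) => ¬ T.card = 0)) (fun T => T.card = 1) F,
        Finset.filter_filter, Finset.filter_filter]
      have hone : (Finset.univ.powerset.filter
          (fun T : Finset (Fin (L₁ + l₂)) => ¬ T.card = 0 ∧ T.card = 1))
          = Finset.univ.powerset.filter (fun T => T.card = 1) := by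
        apply Finset.filter_congr
        intro T _
        constructor
        · tauto
        · intro h; exact ⟨by omega, h⟩
      have htwo : (Finset.univ.powerset.filter
          (fun T : Finset (Fin (L₁ + l₂)) => ¬ T.card = 0 ∧ ¬ T.card = 1))
          = Finset.univ.powerset.filter (fun T => 2 ≤ T.card) := by
        apply Finset.filter_congr
        intro T _
        constructor
        · intro h; omega
        · intro h; exact ⟨by omega, by omega⟩
      rw [hone, htwo, ← hE1def, ← htaildef]
      ring
    have htailb : tail ≤ N * ((W2 + 1) * ν ^ (L₁ + l₂ - 2)) := by
      calc tail ≤ (Finset.univ.powerset.filter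
            (fun T : Finset (Fin (L₁ + l₂)) => 2 ≤ T.card)).card
            • ((W2 + 1) * ν ^ (L₁ + l₂ - 2)) := by
            apply Finset.sum_le_card_nsmul
            intro T hT
            exact hFT2 T (Finset.mem_filter.mp hT).2
        _ ≤ N * ((W2 + 1) * ν ^ (L₁ + l₂ - 2)) := by
            rw [nsmul_eq_mul]
            apply mul_le_mul_of_nonneg_right _ (by positivity)
            calc ((Finset.univ.powerset.filter
                (fun T : Finset (Fin (L₁ + l₂)) => 2 ≤ T.card)).card : ℝ)
                ≤ (Finset.univ.powerset.card : ℝ) := by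
                  exact_mod_cast Finset.card_filter_le _ _
              _ = N := by
                  rw [Finset.card_powerset, Finset.card_univ, Fintype.card_fin, hNdef]
                  push_cast
                  ring
    have hE1low : a/4 * ν ^ (L₁ + l₂ - 1) ≤ E1 := by
      have h4 : 4 * N * (W2 + 1) ≤ a * ν := by
        calc 4 * N * (W2 + 1) = a * (4 * N * (W2 + 1) / a) := by
              field_simp
          _ ≤ a * ν := by
              apply mul_le_mul_of_nonneg_left hνR ha.le
      have htail2 : tail ≤ a/4 * ν ^ (L₁ + l₂ - 1) := by
        have hb : N * (W2 + 1) ≤ a/4 * ν := by linarith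
        calc tail ≤ N * ((W2 + 1) * ν ^ (L₁ + l₂ - 2)) := htailb
          _ = (N * (W2 + 1)) * ν ^ (L₁ + l₂ - 2) := by ring
          _ ≤ (a/4 * ν) * ν ^ (L₁ + l₂ - 2) := mul_le_mul_of_nonneg_right hb hp2.le
          _ = a/4 * ν ^ (L₁ + l₂ - 1) := by rw [hpow1]; ring
      have hE1eq : E1 = (∏ j, ((1:ℝ) + γ ν j)) - PP - tail := by
        rw [hsplit]; ring
      rw [hE1eq]
      have := hdiffν
      rw [hG0] at this
      linarith
    have hE1pos : 0 < E1 := lt_of_lt_of_le (by positivity) hE1low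
    -- structural bound : γ j0 * E1 ≤ N * PP
    have hstruct : γ ν j0 * E1 ≤ N * PP := by
      have hsingle : ∀ T ∈ Finset.univ.powerset.filter
          (fun T : Finset (Fin (L₁ + l₂)) => T.card = 1), γ ν j0 * F T ≤ PP := by
        intro T hT
        obtain ⟨j, rfl⟩ := Finset.card_eq_one.mp (Finset.mem_filter.mp hT).2
        have hFj : F {j} = ∏ k ∈ Finset.univ.erase j, γ ν k := by
          show (∏ k ∈ Finset.univ \ {j}, γ ν k) = _
          rw [Finset.sdiff_singleton_eq_erase]
        rw [hFj]
        have hle : γ ν j0 ≤ γ ν j := by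
          apply hmono.monotone
          rw [Fin.le_def]
          simp [hj0]
        calc γ ν j0 * ∏ k ∈ Finset.univ.erase j, γ ν k
            ≤ γ ν j * ∏ k ∈ Finset.univ.erase j, γ ν k := by
              apply mul_le_mul_of_nonneg_right hle
              exact Finset.prod_nonneg fun k _ => (hσ k).le
          _ = PP := Finset.mul_prod_erase Finset.univ (γ ν) (Finset.mem_univ j)
      calc γ ν j0 * E1 = ∑ T ∈ Finset.univ.powerset.filter
            (fun T : Finset (Fin (L₁ + l₂)) => T.card = 1), γ ν j0 * F T := by
            rw [hE1def, Finset.mul_sum]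
        _ ≤ ∑ T ∈ Finset.univ.powerset.filter
            (fun T : Finset (Fin (L₁ + l₂)) => T.card = 1), PP :=
            Finset.sum_le_sum hsingle
        _ = (Finset.univ.powerset.filter
            (fun T : Finset (Fin (L₁ + l₂)) => T.card = 1)).card • PP := by
            rw [Finset.sum_const]
        _ ≤ N * PP := by
            rw [nsmul_eq_mul]
            apply mul_le_mul_of_nonneg_right _ hPPpos.le
            calc ((Finset.univ.powerset.filter
                (fun T : Finset (Fin (L₁ + l₂)) => T.card = 1)).card : ℝ)
                ≤ (Finset.univ.powerset.card : ℝ) := by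
                  exact_mod_cast Finset.card_filter_le _ _
              _ = N := by
                  rw [Finset.card_powerset, Finset.card_univ, Fintype.card_fin, hNdef]
                  push_cast
                  ring
    -- bound on the smallest eigenvalue
    have hsig0 : γ ν j0 ≤ K := by
      have h5 : γ ν j0 * (a/4 * ν ^ (L₁ + l₂ - 1)) ≤ N * ((W0 + 1) * ν ^ (L₁ + l₂ - 1)) := by
        calc γ ν j0 * (a/4 * ν ^ (L₁ + l₂ - 1)) ≤ γ ν j0 * E1 :=
              mul_le_mul_of_nonneg_left hE1low (hσ j0).le
          _ ≤ N * PP := hstruct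
          _ ≤ N * ((W0 + 1) * ν ^ (L₁ + l₂ - 1)) :=
              mul_le_mul_of_nonneg_left hPle hN.le
      have h6 : γ ν j0 * (a/4) ≤ N * (W0 + 1) := by
        apply le_of_mul_le_mul_right _ hp1
        calc γ ν j0 * (a/4) * ν ^ (L₁ + l₂ - 1) = γ ν j0 * (a/4 * ν ^ (L₁ + l₂ - 1)) := by ring
          _ ≤ N * ((W0 + 1) * ν ^ (L₁ + l₂ - 1)) := h5
          _ = N * (W0 + 1) * ν ^ (L₁ + l₂ - 1) := by ring
      rw [hKdef]
      rw [le_div_iff₀ ha]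
      linarith
    -- lower bound on the second eigenvalue
    have hPPfac : PP = F {j0, j1} * (γ ν j0 * γ ν j1) := by
      rw [hFdef]
      calc PP = (∏ j ∈ Finset.univ \ {j0, j1}, γ ν j) * ∏ j ∈ {j0, j1}, γ ν j :=
            (Finset.prod_sdiff (Finset.subset_univ _)).symm
        _ = (∏ j ∈ Finset.univ \ {j0, j1}, γ ν j) * (γ ν j0 * γ ν j1) := by
            rw [Finset.prod_pair hj01]
    have hsig1 : c3 * ν ≤ γ ν j1 := by
      have hFb : F {j0, j1} ≤ (W2 + 1) * ν ^ (L₁ + l₂ - 2) :=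
        hFT2 _ (by rw [Finset.card_pair hj01])
      have hE1b : E1 ≤ N * (γ ν j1 * F {j0, j1}) := by
        have h7 : γ ν j0 * E1 ≤ γ ν j0 * (N * (γ ν j1 * F {j0, j1})) := by
          calc γ ν j0 * E1 ≤ N * PP := hstruct
            _ = γ ν j0 * (N * (γ ν j1 * F {j0, j1})) := by rw [hPPfac]; ring
        exact le_of_mul_le_mul_left h7 (hσ j0)
      have h8 : a/4 * ν ^ (L₁ + l₂ - 1) ≤ N * (W2 + 1) * γ ν j1 * ν ^ (L₁ + l₂ - 2) := by
        calc a/4 * ν ^ (L₁ + l₂ - 1) ≤ E1 := hE1low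
          _ ≤ N * (γ ν j1 * F {j0, j1}) := hE1b
          _ ≤ N * (γ ν j1 * ((W2 + 1) * ν ^ (L₁ + l₂ - 2))) := by
              apply mul_le_mul_of_nonneg_left _ hN.le
              exact mul_le_mul_of_nonneg_left hFb (hσ j1).le
          _ = N * (W2 + 1) * γ ν j1 * ν ^ (L₁ + l₂ - 2) := by ring
      have h9 : a/4 * ν ≤ N * (W2 + 1) * γ ν j1 := by
        have h10 : a/4 * ν * ν ^ (L₁ + l₂ - 2) ≤ N * (W2 + 1) * γ ν j1 * ν ^ (L₁ + l₂ - 2) := by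
          calc a/4 * ν * ν ^ (L₁ + l₂ - 2) = a/4 * ν ^ (L₁ + l₂ - 1) := by rw [hpow1]; ring
            _ ≤ N * (W2 + 1) * γ ν j1 * ν ^ (L₁ + l₂ - 2) := h8
        exact le_of_mul_le_mul_right h10 hp2
      rw [hc3def, div_mul_eq_mul_div, div_le_iff₀ (by positivity)]
      linarith
    have hsig1pos : 0 < c3 * ν := by positivity
    -- sum of inverses of the non-minimal eigenvalues
    have hrest : ∑ j ∈ Finset.univ.erase j0, (γ ν j)⁻¹ ≤ (L₁ + l₂ : ℝ) * (c3 * ν)⁻¹ := by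
      calc ∑ j ∈ Finset.univ.erase j0, (γ ν j)⁻¹
          ≤ (Finset.univ.erase j0).card • (c3 * ν)⁻¹ := by
            apply Finset.sum_le_card_nsmul
            intro j hj
            have hjne : j ≠ j0 := (Finset.mem_erase.mp hj).1
            have hj1le : j1 ≤ j := by
              rw [Fin.le_def]
              simp only [hj1]
              have : (j : ℕ) ≠ 0 := by
                intro hc
                exact hjne (Fin.ext (by simp [hj0, hc]))
              omega
            have : c3 * ν ≤ γ ν j := le_trans hsig1 (hmono.monotone hj1le)
            exact inv_anti₀ hsig1pos this
        _ ≤ (L₁ + l₂ : ℝ) * (c3 * ν)⁻¹ := by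
            rw [nsmul_eq_mul]
            apply mul_le_mul_of_nonneg_right _ (by positivity)
            calc ((Finset.univ.erase j0).card : ℝ) ≤ (Finset.univ.card : ℝ) := by
                  exact_mod_cast Finset.card_le_card (Finset.erase_subset _ _)
              _ = (L₁ + l₂ : ℝ) := by
                  rw [Finset.card_univ, Fintype.card_fin]
                  push_cast
                  ring
    have hrestnn : 0 ≤ ∑ j ∈ Finset.univ.erase j0, (γ ν j)⁻¹ :=
      Finset.sum_nonneg fun j _ => (inv_nonneg).mpr (hσ j).le
    have hSeq : (∑ j, (γ ν j)⁻¹)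
        = (γ ν j0)⁻¹ + ∑ j ∈ Finset.univ.erase j0, (γ ν j)⁻¹ :=
      (Finset.add_sum_erase Finset.univ _ (Finset.mem_univ j0)).symm
    refine ⟨⟨?_, ?_⟩, ?_⟩
    · -- 1 ≤ γ j0 * S
      rw [hSeq, mul_add, mul_inv_cancel₀ (hσ j0).ne']
      linarith [mul_nonneg (hσ j0).le hrestnn]
    · -- upper bound
      rw [hSeq, mul_add, mul_inv_cancel₀ (hσ j0).ne']
      have : γ ν j0 * ∑ j ∈ Finset.univ.erase j0, (γ ν j)⁻¹
          ≤ K * ((L₁ + l₂ : ℝ) * (c3 * ν)⁻¹) := by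
        apply mul_le_mul hsig0 hrest hrestnn hK.le
      have heq : K * ((L₁ + l₂ : ℝ) * (c3 * ν)⁻¹) = K * (L₁ + l₂ : ℝ) / c3 * ν⁻¹ := by
        rw [mul_inv]
        ring
      linarith [heq ▸ this]
    · -- second part
      intro i hi
      have hile : j1 ≤ i := by
        rw [Fin.le_def]
        simp only [hj1]
        omega
      have hgi : c3 * ν ≤ γ ν i := le_trans hsig1 (hmono.monotone hile)
      have hSlow : K⁻¹ ≤ ∑ j, (γ ν j)⁻¹ := by
        rw [hSeq]
        have : K⁻¹ ≤ (γ ν j0)⁻¹ := by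
          apply inv_anti₀ (hσ j0) hsig0
        linarith
      calc (c3 / K) * ν = (c3 * ν) * K⁻¹ := by ring
        _ ≤ γ ν i * ∑ j, (γ ν j)⁻¹ := by
            apply mul_le_mul hgi hSlow (by positivity) _
            exact le_trans hsig1pos.le hgi
    -- conclude
  constructor
  · have hupper : Tendsto (fun ν : ℝ => 1 + (K * (L₁ + l₂ : ℝ) / c3) * ν⁻¹) atTop (nhds 1) := by
      have h := tendsto_inv_atTop_zero.const_mul (K * (L₁ + l₂ : ℝ) / c3)
      have h2 := (tendsto_const_nhds :
        Tendsto (fun _ : ℝ => (1:ℝ)) atTop (nhds 1)).add h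
      simpa using h2
    apply tendsto_of_tendsto_of_tendsto_of_le_of_le' tendsto_const_nhds hupper
    · filter_upwards [main] with ν hm
      exact hm.1.1
    · filter_upwards [main] with ν hm
      exact hm.1.2
  · intro i hi
    apply tendsto_atTop_mono' atTop
    · filter_upwards [main] with ν hm
      exact hm.2 i hi
    · exact (tendsto_id.const_mul_atTop (by positivity))
end

section
/- For each ν > 0, let T(ν), U(ν), V(ν), W(ν) be nonnegative integrable random variables on a common probability space, with E U(ν) > 0 and E T(ν) > 0. Assume: (i) E V(ν)/E U(ν) → 0 and E W(ν)/E U(ν) → 0 as ν → ∞; (ii) for every ν > 0 and every t > 0, P(U(ν) − V(ν) > t) ≤ P(T(ν) > t) ≤ P(U(ν) + W(ν) > t); (iii) U(ν)/E U(ν) converges in distribution, as ν → ∞, to a random variable X (not depending on ν) whose cumulative distribution function is continuous. Then T(ν)/E T(ν) converges in distribution to X as ν → ∞. -/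
open Filter MeasureTheory ProbabilityTheory

open Filter MeasureTheory ProbabilityTheory Set Topology
open scoped NNReal ENNReal

lemma exists_mem_Ioc_partition (t : ℕ → ℝ) : ∀ (N : ℕ) (x : ℝ), t 0 < x → x ≤ t N →
    ∃ j < N, t j < x ∧ x ≤ t (j + 1) := by
  intro N
  induction N with
  | zero => intro x h1 h2; exact absurd (h1.trans_le h2) (lt_irrefl _)
  | succ N ih =>
    intro x h1 h2
    rcases le_or_gt x (t N) with h | h
    · obtain ⟨j, hj, hj2⟩ := ih x h1 h
      exact ⟨j, hj.trans (Nat.lt_succ_self N), hj2⟩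
    · exact ⟨N, Nat.lt_succ_self N, h, h2⟩

set_option maxHeartbeats 1000000 in
/-- Pointwise convergence of c.d.f.s to the c.d.f. of a limit probability measure implies
convergence of integrals of bounded continuous functions. -/
lemma tendsto_integral_of_cdf {ι : Type*} {L : Filter ι} (μ : Measure ℝ)
    [IsProbabilityMeasure μ] (μs : ι → Measure ℝ) (hμs : ∀ i, IsProbabilityMeasure (μs i))
    (h : ∀ t : ℝ, Tendsto (fun i => (μs i (Set.Iic t)).toReal) L (𝓝 ((μ (Set.Iic t)).toReal)))
    (f : BoundedContinuousFunction ℝ ℝ) :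
    Tendsto (fun i => ∫ x, f x ∂ μs i) L (𝓝 (∫ x, f x ∂μ)) := by
  rw [Metric.tendsto_nhds]
  intro ε hε
  set C := ‖f‖ with hCdef
  have hC0 : 0 ≤ C := norm_nonneg f
  set ε' := ε / (11 * (C + 1)) with hε'def
  have hε' : 0 < ε' := by positivity
  -- choose truncation points
  obtain ⟨A, hA1, hA2⟩ : ∃ A : ℝ, 1 - ε' < cdf μ A ∧ 1 ≤ A :=
    (((tendsto_cdf_atTop μ).eventually (eventually_gt_nhds (by linarith))).and
      (eventually_ge_atTop 1)).exists
  obtain ⟨B, hB1, hB2⟩ : ∃ B : ℝ, cdf μ B < ε' ∧ B ≤ -1 :=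
    (((tendsto_cdf_atBot μ).eventually (eventually_lt_nhds hε')).and
      (eventually_le_atBot (-1))).exists
  have hBA : B + 2 ≤ A := by linarith
  -- uniform continuity
  have hucont : UniformContinuousOn f (Icc B (A + 1)) :=
    isCompact_Icc.uniformContinuousOn_of_continuous f.continuous.continuousOn
  rw [Metric.uniformContinuousOn_iff] at hucont
  obtain ⟨δ, hδ0, hδ⟩ := hucont ε' hε'
  set δ' := min δ 1 / 2 with hδ'def
  have hδ'0 : 0 < δ' := by positivity
  have hδ'δ : δ' < δ := by
    rcases min_cases δ 1 with ⟨h1, h2⟩ | ⟨h1, h2⟩ <;> rw [hδ'def, h1] <;> linarith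
  have hδ'1 : δ' ≤ 1 := by
    rcases min_cases δ 1 with ⟨h1, h2⟩ | ⟨h1, h2⟩ <;> rw [hδ'def, h1] <;> linarith
  set N := ⌈(A - B) / δ'⌉₊ with hNdef
  set t : ℕ → ℝ := fun j => B + j * δ' with htdef
  have htmono : StrictMono t := fun j k hjk => by
    simp only [htdef]
    have : (j : ℝ) < k := by exact_mod_cast hjk
    nlinarith
  have ht0 : t 0 = B := by simp [htdef]
  have htN_ge : A ≤ t N := by
    have := Nat.le_ceil ((A - B) / δ')
    rw [div_le_iff₀ hδ'0] at this
    simp only [htdef]; linarith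
  have htN_le : t N ≤ A + 1 := by
    have h2 : (N : ℝ) < (A - B) / δ' + 1 :=
      Nat.ceil_lt_add_one (div_nonneg (by linarith) hδ'0.le)
    have h3 : (N : ℝ) * δ' < ((A - B) / δ' + 1) * δ' := by
      apply mul_lt_mul_of_pos_right h2 hδ'0
    rw [add_mul, div_mul_cancel₀ _ hδ'0.ne', one_mul] at h3
    simp only [htdef]; linarith
  have htIcc : ∀ j ≤ N, t j ∈ Icc B (A + 1) := by
    intro j hj
    constructor
    · simp only [htdef]
      have : (0:ℝ) ≤ (j:ℝ) * δ' := by positivity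
      linarith
    · exact le_trans (htmono.monotone hj) htN_le
  -- the step function
  set g : ℝ → ℝ := fun x =>
    ∑ j ∈ Finset.range N, Set.indicator (Set.Ioc (t j) (t (j + 1))) (fun _ => f (t (j + 1))) x
    with hgdef
  have hg_out : ∀ x : ℝ, x ∉ Set.Ioc (t 0) (t N) → g x = 0 := by
    intro x hx
    apply Finset.sum_eq_zero
    intro j hj
    rw [Finset.mem_range] at hj
    apply Set.indicator_of_notMem
    intro hxj
    exact hx ⟨lt_of_le_of_lt (htmono.monotone (Nat.zero_le j)) hxj.1,
      hxj.2.trans (htmono.monotone hj)⟩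
  have hg_in : ∀ x ∈ Set.Ioc (t 0) (t N), |f x - g x| ≤ ε' := by
    intro x hx
    obtain ⟨j, hjN, hj1, hj2⟩ := exists_mem_Ioc_partition t N x hx.1 hx.2
    have hgx : g x = f (t (j + 1)) := by
      show (∑ j ∈ Finset.range N, Set.indicator (Set.Ioc (t j) (t (j + 1))) (fun _ => f (t (j + 1))) x) = f (t (j + 1))
      rw [Finset.sum_eq_single j]
      · exact Set.indicator_of_mem (Set.mem_Ioc.mpr ⟨hj1, hj2⟩) _
      · intro k hk hkj
        apply Set.indicator_of_notMem
        rcases lt_or_gt_of_ne hkj with h | h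
        · intro hxk
          exact absurd (hxk.2.trans_lt (lt_of_le_of_lt (htmono.monotone h) hj1))
            (lt_irrefl x)
        · intro hxk
          exact absurd ((hj2.trans (htmono.monotone h)).trans_lt hxk.1) (lt_irrefl x)
      · intro hj; exact absurd (Finset.mem_range.mpr hjN) hj
    rw [hgx]
    have hx_mem : x ∈ Icc B (A + 1) :=
      ⟨le_of_lt (ht0 ▸ hx.1), hx.2.trans htN_le⟩
    have ht_mem : t (j + 1) ∈ Icc B (A + 1) := htIcc (j + 1) hjN
    have hdist : dist x (t (j + 1)) < δ := by
      rw [Real.dist_eq, abs_of_nonpos (by linarith : x - t (j + 1) ≤ 0)]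
      have : t (j + 1) - t j = δ' := by simp only [htdef]; push_cast; ring
      linarith
    exact le_of_lt ((Real.dist_eq _ _) ▸ hδ x hx_mem (t (j + 1)) ht_mem hdist)
  -- integrals of the step function
  have hIoc_meas : ∀ j : ℕ, MeasurableSet (Set.Ioc (t j) (t (j + 1))) :=
    fun j => measurableSet_Ioc
  have hg_int : ∀ (κ : Measure ℝ), IsProbabilityMeasure κ → Integrable g κ := by
    intro κ hκ
    haveI := hκ
    apply integrable_finset_sum
    intro j hj
    exact (integrable_const _).indicator (hIoc_meas j)
  -- measure of Ioc via Iic's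
  have hμIoc : ∀ (κ : Measure ℝ), IsProbabilityMeasure κ → ∀ (c d : ℝ), c ≤ d →
      (κ (Set.Ioc c d)).toReal = (κ (Set.Iic d)).toReal - (κ (Set.Iic c)).toReal := by
    intro κ hκ c d hcd
    haveI := hκ
    have h1 : Set.Ioc c d = Set.Iic d \ Set.Iic c := by ext x; simp [and_comm]
    rw [h1, measure_diff (Set.Iic_subset_Iic.mpr hcd) measurableSet_Iic.nullMeasurableSet
      (measure_ne_top κ _)]
    exact ENNReal.toReal_sub_of_le (measure_mono (Set.Iic_subset_Iic.mpr hcd))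
      (measure_ne_top κ _)
  set S : Measure ℝ → ℝ := fun κ =>
    ∑ j ∈ Finset.range N, f (t (j + 1)) *
      ((κ (Set.Iic (t (j + 1)))).toReal - (κ (Set.Iic (t j))).toReal) with hSdef
  have hSg : ∀ (κ : Measure ℝ), IsProbabilityMeasure κ → ∫ x, g x ∂κ = S κ := by
    intro κ hκ
    haveI := hκ
    rw [hgdef]
    rw [integral_finset_sum _ (fun j hj => (integrable_const _).indicator (hIoc_meas j))]
    apply Finset.sum_congr rfl
    intro j hj
    rw [integral_indicator_const _ (hIoc_meas j), smul_eq_mul, mul_comm,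
      measureReal_def, hμIoc κ hκ _ _ (htmono.monotone (Nat.le_succ j))]
  -- main approximation bound
  have hfS : ∀ (κ : Measure ℝ), IsProbabilityMeasure κ →
      |∫ x, f x ∂κ - S κ| ≤ ε' + 2 * C *
        (1 - ((κ (Set.Iic (t N))).toReal - (κ (Set.Iic (t 0))).toReal)) := by
    intro κ hκ
    haveI := hκ
    rw [← hSg κ hκ, ← integral_sub (f.integrable κ) (hg_int κ hκ)]
    have step1 : |∫ x, (f x - g x) ∂κ| ≤ ∫ x, |f x - g x| ∂κ := by
      simpa [Real.norm_eq_abs] using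
        norm_integral_le_integral_norm (μ := κ) (f := fun x => f x - g x)
    set h : ℝ → ℝ := fun x =>
      ε' + Set.indicator (Set.Ioc (t 0) (t N))ᶜ (fun _ => 2 * C) x with hhdef
    have hh_int : Integrable h κ :=
      (integrable_const _).add ((integrable_const _).indicator
        (measurableSet_Ioc.compl))
    have step2 : ∫ x, |f x - g x| ∂κ ≤ ∫ x, h x ∂κ := by
      apply integral_mono ((f.integrable κ).sub (hg_int κ hκ)).abs hh_int
      intro x
      show |f x - g x| ≤ h x
      by_cases hx : x ∈ Set.Ioc (t 0) (t N)
      · have : h x = ε' := by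
          simp only [hhdef, Set.indicator_of_notMem (Set.notMem_compl_iff.mpr hx), add_zero]
        rw [this]
        exact hg_in x hx
      · have : h x = ε' + 2 * C := by
          simp only [hhdef, Set.indicator_of_mem (Set.mem_compl hx)]
        rw [this, hg_out x hx, sub_zero]
        have := f.norm_coe_le_norm x
        rw [Real.norm_eq_abs] at this
        linarith
    have step3 : ∫ x, h x ∂κ = ε' + 2 * C * (κ (Set.Ioc (t 0) (t N))ᶜ).toReal := by
      rw [hhdef, integral_add (integrable_const _) ((integrable_const _).indicator
        (measurableSet_Ioc.compl)), integral_const, integral_indicator_const _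
        (measurableSet_Ioc.compl), probReal_univ, measureReal_def, smul_eq_mul,
        smul_eq_mul, one_mul, mul_comm]
    have step4 : (κ (Set.Ioc (t 0) (t N))ᶜ).toReal =
        1 - ((κ (Set.Iic (t N))).toReal - (κ (Set.Iic (t 0))).toReal) := by
      rw [prob_compl_eq_one_sub measurableSet_Ioc,
        ENNReal.toReal_sub_of_le prob_le_one ENNReal.one_ne_top, ENNReal.toReal_one,
        hμIoc κ hκ _ _ (htmono.monotone (Nat.zero_le N))]
    calc |∫ x, (f x - g x) ∂κ| ≤ ∫ x, |f x - g x| ∂κ := step1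
      _ ≤ ∫ x, h x ∂κ := step2
      _ = ε' + 2 * C * (1 - ((κ (Set.Iic (t N))).toReal - (κ (Set.Iic (t 0))).toReal)) := by
          rw [step3, step4]
  -- convergence of the step sums
  have hS_tendsto : Tendsto (fun i => S (μs i)) L (𝓝 (S μ)) := by
    apply tendsto_finset_sum
    intro j hj
    exact ((h (t (j + 1))).sub (h (t j))).const_mul _
  -- cdf values at endpoints
  have hcdfN : (μ (Set.Iic (t N))).toReal = cdf μ (t N) := (cdf_eq_real μ _).symm
  have hcdf0 : (μ (Set.Iic (t 0))).toReal = cdf μ (t 0) := (cdf_eq_real μ _).symm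
  have hFN : 1 - ε' < (μ (Set.Iic (t N))).toReal := by
    rw [hcdfN]; exact hA1.trans_le (monotone_cdf μ htN_ge)
  have hF0 : (μ (Set.Iic (t 0))).toReal < ε' := by
    rw [hcdf0, ht0]; exact hB1
  have hev1 : ∀ᶠ i in L, 1 - ε' < (μs i (Set.Iic (t N))).toReal :=
    (h (t N)).eventually (eventually_gt_nhds hFN)
  have hev2 : ∀ᶠ i in L, (μs i (Set.Iic (t 0))).toReal < ε' :=
    (h (t 0)).eventually (eventually_lt_nhds hF0)
  have hev3 : ∀ᶠ i in L, |S (μs i) - S μ| < ε' := by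
    have := Metric.tendsto_nhds.mp hS_tendsto ε' hε'
    filter_upwards [this] with i hi
    rwa [Real.dist_eq] at hi
  filter_upwards [hev1, hev2, hev3] with i h1 h2 h3
  haveI := hμs i
  have b1 := hfS (μs i) (hμs i)
  have b2 := hfS μ ‹_›
  rw [Real.dist_eq]
  have tri : |∫ x, f x ∂μs i - ∫ x, f x ∂μ| ≤
      |∫ x, f x ∂μs i - S (μs i)| + |S (μs i) - S μ| + |S μ - ∫ x, f x ∂μ| := by
    have := abs_sub_le (∫ x, f x ∂μs i) (S (μs i)) (∫ x, f x ∂μ)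
    have := abs_sub_le (S (μs i)) (S μ) (∫ x, f x ∂μ)
    calc |∫ x, f x ∂μs i - ∫ x, f x ∂μ|
        ≤ |∫ x, f x ∂μs i - S (μs i)| + |S (μs i) - ∫ x, f x ∂μ| :=
          abs_sub_le _ _ _
      _ ≤ |∫ x, f x ∂μs i - S (μs i)| + (|S (μs i) - S μ| + |S μ - ∫ x, f x ∂μ|) := by
          linarith [abs_sub_le (S (μs i)) (S μ) (∫ x, f x ∂μ)]
      _ = _ := by ring
  have e1 : 1 - ((μs i (Set.Iic (t N))).toReal - (μs i (Set.Iic (t 0))).toReal) ≤ 2 * ε' := by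
    linarith
  have e2 : 1 - ((μ (Set.Iic (t N))).toReal - (μ (Set.Iic (t 0))).toReal) ≤ 2 * ε' := by
    linarith
  have habs : |S μ - ∫ x, f x ∂μ| = |∫ x, f x ∂μ - S μ| := abs_sub_comm _ _
  have h2C : (0:ℝ) ≤ 2 * C := by linarith
  have hb1' : |∫ x, f x ∂μs i - S (μs i)| ≤ ε' + 2 * C * (2 * ε') :=
    b1.trans (add_le_add_right (mul_le_mul_of_nonneg_left e1 h2C) ε')
  have hb2' : |∫ x, f x ∂μ - S μ| ≤ ε' + 2 * C * (2 * ε') :=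
    b2.trans (add_le_add_right (mul_le_mul_of_nonneg_left e2 h2C) ε')
  have final : |∫ x, f x ∂μs i - ∫ x, f x ∂μ| ≤ 3 * ε' + 8 * C * ε' := by
    rw [habs] at tri
    linarith
  have h11 : (0:ℝ) < 11 * (C + 1) := by linarith
  have heq : 11 * (C + 1) * ε' = ε := by
    rw [hε'def]; field_simp
  have hlt : 3 * ε' + 8 * C * ε' < 11 * (C + 1) * ε' := by nlinarith
  linarith

set_option maxHeartbeats 1000000 in
/-- For each `ν > 0`, let `T(ν), U(ν), V(ν), W(ν)` be nonnegative integrable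
random variables on a common probability space `(Ω ν, P ν)`, with
`E U(ν) > 0` and `E T(ν) > 0`.  Assume:
(i) `E V(ν)/E U(ν) → 0` and `E W(ν)/E U(ν) → 0` as `ν → ∞`;
(ii) for every `ν > 0` and every `t > 0`,
`P(U(ν) − V(ν) > t) ≤ P(T(ν) > t) ≤ P(U(ν) + W(ν) > t)`;
(iii) `U(ν)/E U(ν)` converges in distribution, as `ν → ∞`, to a law `μX`
(independent of `ν`) with continuous c.d.f.
Then `T(ν)/E T(ν)` converges in distribution to `μX` as `ν → ∞`. -/
theorem scaled_transition_time_sandwich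
    {Ω : ℝ → Type*} [∀ ν, MeasurableSpace (Ω ν)]
    (P : ∀ ν : ℝ, Measure (Ω ν)) (hP : ∀ ν, IsProbabilityMeasure (P ν))
    (T U V W : ∀ ν : ℝ, Ω ν → ℝ)
    (hTm : ∀ ν, Measurable (T ν)) (hUm : ∀ ν, Measurable (U ν))
    (hVm : ∀ ν, Measurable (V ν)) (hWm : ∀ ν, Measurable (W ν))
    (hTnn : ∀ ν, 0 < ν → ∀ ω, 0 ≤ T ν ω) (hUnn : ∀ ν, 0 < ν → ∀ ω, 0 ≤ U ν ω)
    (hVnn : ∀ ν, 0 < ν → ∀ ω, 0 ≤ V ν ω) (hWnn : ∀ ν, 0 < ν → ∀ ω, 0 ≤ W ν ω)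
    (hTi : ∀ ν, 0 < ν → Integrable (T ν) (P ν))
    (hUi : ∀ ν, 0 < ν → Integrable (U ν) (P ν))
    (hVi : ∀ ν, 0 < ν → Integrable (V ν) (P ν))
    (hWi : ∀ ν, 0 < ν → Integrable (W ν) (P ν))
    (hUpos : ∀ ν, 0 < ν → 0 < ∫ ω, U ν ω ∂(P ν))
    (hTpos : ∀ ν, 0 < ν → 0 < ∫ ω, T ν ω ∂(P ν))
    (hV : Tendsto (fun ν => (∫ ω, V ν ω ∂(P ν)) / ∫ ω, U ν ω ∂(P ν))
      atTop (nhds 0))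
    (hW : Tendsto (fun ν => (∫ ω, W ν ω ∂(P ν)) / ∫ ω, U ν ω ∂(P ν))
      atTop (nhds 0))
    (hsandwich : ∀ ν, 0 < ν → ∀ t : ℝ, 0 < t →
      P ν {ω | t < U ν ω - V ν ω} ≤ P ν {ω | t < T ν ω} ∧
      P ν {ω | t < T ν ω} ≤ P ν {ω | t < U ν ω + W ν ω})
    (μX : Measure ℝ) (hμX : IsProbabilityMeasure μX)
    (hcdf : Continuous (cdf μX))
    (hUconv : ∀ f : BoundedContinuousFunction ℝ ℝ,
      Tendsto (fun ν => ∫ ω, f (U ν ω / ∫ ω', U ν ω' ∂(P ν)) ∂(P ν))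
        atTop (nhds (∫ x, f x ∂μX))) :
    ∀ f : BoundedContinuousFunction ℝ ℝ,
      Tendsto (fun ν => ∫ ω, f (T ν ω / ∫ ω', T ν ω' ∂(P ν)) ∂(P ν))
        atTop (nhds (∫ x, f x ∂μX)) := by
  haveI : ∀ ν, IsProbabilityMeasure (P ν) := hP
  set a : ℝ → ℝ := fun ν => ∫ ω, U ν ω ∂(P ν) with hadef
  set b : ℝ → ℝ := fun ν => ∫ ω, T ν ω ∂(P ν) with hbdef
  have hapos : ∀ ν, 0 < ν → 0 < a ν := hUpos
  have hbpos : ∀ ν, 0 < ν → 0 < b ν := hTpos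
  -- Step 1: the means are sandwiched
  have hmean_ub : ∀ ν, 0 < ν → b ν ≤ a ν + ∫ ω, W ν ω ∂(P ν) := by
    intro ν hν
    have hUWi : Integrable (fun ω => U ν ω + W ν ω) (P ν) := (hUi ν hν).add (hWi ν hν)
    have hUWnn : (0:Ω ν → ℝ) ≤ᵐ[P ν] fun ω => U ν ω + W ν ω :=
      ae_of_all _ fun ω => add_nonneg (hUnn ν hν ω) (hWnn ν hν ω)
    have LT := lintegral_eq_lintegral_meas_lt (P ν) (ae_of_all _ (hTnn ν hν))
      (hTm ν).aemeasurable
    have LUW := lintegral_eq_lintegral_meas_lt (P ν) hUWnn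
      ((hUm ν).add (hWm ν)).aemeasurable
    have hmono : ∫⁻ s in Set.Ioi (0:ℝ), P ν {ω | s < T ν ω}
        ≤ ∫⁻ s in Set.Ioi (0:ℝ), P ν {ω | s < U ν ω + W ν ω} :=
      setLIntegral_mono' measurableSet_Ioi fun s hs => (hsandwich ν hν s hs).2
    have key : ∫⁻ ω, ENNReal.ofReal (T ν ω) ∂(P ν)
        ≤ ∫⁻ ω, ENNReal.ofReal (U ν ω + W ν ω) ∂(P ν) := by
      rw [LT, LUW]; exact hmono
    have e1 : b ν = (∫⁻ ω, ENNReal.ofReal (T ν ω) ∂(P ν)).toReal :=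
      integral_eq_lintegral_of_nonneg_ae (ae_of_all _ (hTnn ν hν))
        (hTm ν).aestronglyMeasurable
    have e2 : a ν + ∫ ω, W ν ω ∂(P ν)
        = (∫⁻ ω, ENNReal.ofReal (U ν ω + W ν ω) ∂(P ν)).toReal := by
      rw [← integral_eq_lintegral_of_nonneg_ae hUWnn
        ((hUm ν).add (hWm ν)).aestronglyMeasurable]
      exact (integral_add (hUi ν hν) (hWi ν hν)).symm
    rw [e1, e2]
    exact ENNReal.toReal_mono hUWi.lintegral_lt_top.ne key
  have hmean_lb : ∀ ν, 0 < ν → a ν - ∫ ω, V ν ω ∂(P ν) ≤ b ν := by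
    intro ν hν
    set V' : Ω ν → ℝ := fun ω => max (U ν ω - V ν ω) 0 with hV'def
    have hV'm : Measurable V' := ((hUm ν).sub (hVm ν)).max measurable_const
    have hV'i : Integrable V' (P ν) := ((hUi ν hν).sub (hVi ν hν)).pos_part
    have hV'nn : (0:Ω ν → ℝ) ≤ᵐ[P ν] V' := ae_of_all _ fun ω => le_max_right _ _
    have stepA : a ν - ∫ ω, V ν ω ∂(P ν) ≤ ∫ ω, V' ω ∂(P ν) := by
      rw [← integral_sub (hUi ν hν) (hVi ν hν)]
      exact integral_mono ((hUi ν hν).sub (hVi ν hν)) hV'i fun ω => le_max_left _ _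
    have LV' := lintegral_eq_lintegral_meas_lt (P ν) hV'nn hV'm.aemeasurable
    have LT := lintegral_eq_lintegral_meas_lt (P ν) (ae_of_all _ (hTnn ν hν))
      (hTm ν).aemeasurable
    have hcongr : ∫⁻ s in Set.Ioi (0:ℝ), P ν {ω | s < V' ω}
        = ∫⁻ s in Set.Ioi (0:ℝ), P ν {ω | s < U ν ω - V ν ω} := by
      apply setLIntegral_congr_fun measurableSet_Ioi
      intro s hs
      beta_reduce
      congr 1
      ext ω
      simp only [Set.mem_setOf_eq, hV'def, lt_max_iff]
      exact or_iff_left (not_lt.mpr (le_of_lt hs))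
    have hmono : ∫⁻ s in Set.Ioi (0:ℝ), P ν {ω | s < U ν ω - V ν ω}
        ≤ ∫⁻ s in Set.Ioi (0:ℝ), P ν {ω | s < T ν ω} :=
      setLIntegral_mono' measurableSet_Ioi fun s hs => (hsandwich ν hν s hs).1
    have key : ∫⁻ ω, ENNReal.ofReal (V' ω) ∂(P ν)
        ≤ ∫⁻ ω, ENNReal.ofReal (T ν ω) ∂(P ν) := by
      rw [LV', LT, hcongr]; exact hmono
    have e1 : ∫ ω, V' ω ∂(P ν) = (∫⁻ ω, ENNReal.ofReal (V' ω) ∂(P ν)).toReal :=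
      integral_eq_lintegral_of_nonneg_ae hV'nn hV'm.aestronglyMeasurable
    have e2 : b ν = (∫⁻ ω, ENNReal.ofReal (T ν ω) ∂(P ν)).toReal :=
      integral_eq_lintegral_of_nonneg_ae (ae_of_all _ (hTnn ν hν))
        (hTm ν).aestronglyMeasurable
    refine stepA.trans ?_
    rw [e1, e2]
    exact ENNReal.toReal_mono (hTi ν hν).lintegral_lt_top.ne key
  -- Step 1b : b ν / a ν → 1
  have hba : Tendsto (fun ν => b ν / a ν) atTop (𝓝 1) := by
    apply tendsto_of_tendsto_of_tendsto_of_le_of_le'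
      (g := fun ν => 1 - (∫ ω, V ν ω ∂(P ν)) / a ν)
      (h := fun ν => 1 + (∫ ω, W ν ω ∂(P ν)) / a ν)
    · simpa using tendsto_const_nhds.sub hV
    · simpa using tendsto_const_nhds.add hW
    · filter_upwards [eventually_gt_atTop 0] with ν hν
      have h1 : 1 - (∫ ω, V ν ω ∂(P ν)) / a ν = (a ν - ∫ ω, V ν ω ∂(P ν)) / a ν := by
        rw [sub_div, div_self (hapos ν hν).ne']
      rw [h1]
      gcongr
      · exact (hapos ν hν).le
      · exact hmean_lb ν hν
    · filter_upwards [eventually_gt_atTop 0] with ν hν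
      have h1 : 1 + (∫ ω, W ν ω ∂(P ν)) / a ν = (a ν + ∫ ω, W ν ω ∂(P ν)) / a ν := by
        rw [add_div, div_self (hapos ν hν).ne']
      rw [h1]
      gcongr
      · exact (hapos ν hν).le
      · exact hmean_ub ν hν
  -- Step 2: convergence of the laws of U/EU as probability measures
  set μU : ℝ → ProbabilityMeasure ℝ := fun ν =>
    ⟨(P ν).map (fun ω => U ν ω / a ν),
      Measure.isProbabilityMeasure_map ((hUm ν).div_const (a ν)).aemeasurable⟩ with hμUdef
  set μX' : ProbabilityMeasure ℝ := ⟨μX, hμX⟩ with hμX'def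
  have hUtend : Tendsto μU atTop (𝓝 μX') := by
    rw [ProbabilityMeasure.tendsto_iff_forall_integral_tendsto]
    intro f
    have heq : ∀ ν : ℝ, ∫ x, f x ∂((μU ν : Measure ℝ)) = ∫ ω, f (U ν ω / a ν) ∂(P ν) :=
      fun ν => integral_map ((hUm ν).div_const (a ν)).aemeasurable
        f.continuous.measurable.aestronglyMeasurable
    simp only [heq]
    exact hUconv f
  have hXatom : ∀ s : ℝ, μX {s} = 0 := by
    intro s
    conv_lhs => rw [← measure_cdf μX]
    rw [StieltjesFunction.measure_singleton]
    have hll : Function.leftLim (cdf μX) s = cdf μX s :=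
      leftLim_eq_of_tendsto
        ((hcdf.tendsto s).mono_left nhdsWithin_le_nhds)
    rw [hll, sub_self, ENNReal.ofReal_zero]
  have hIic : ∀ s : ℝ, Tendsto (fun ν => (P ν {ω | U ν ω / a ν ≤ s}).toReal)
      atTop (𝓝 (cdf μX s)) := by
    intro s
    have hnull : μX' (frontier (Set.Iic s)) = 0 := by
      rw [frontier_Iic]
      simp only [ProbabilityMeasure.coeFn_def]
      rw [show (μX' : Measure ℝ) = μX from rfl, hXatom s]
      rfl
    have key := ProbabilityMeasure.tendsto_measure_of_null_frontier_of_tendsto hUtend hnull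
    have key2 : Tendsto (fun ν => ((μU ν (Set.Iic s) : ℝ≥0) : ℝ)) atTop
        (𝓝 ((μX' (Set.Iic s) : ℝ≥0) : ℝ)) :=
      (NNReal.continuous_coe.tendsto _).comp key
    have h1 : ∀ ν : ℝ, ((μU ν (Set.Iic s) : ℝ≥0) : ℝ)
        = (P ν {ω | U ν ω / a ν ≤ s}).toReal := by
      intro ν
      have hmap : ((μU ν : Measure ℝ)) (Set.Iic s) = P ν {ω | U ν ω / a ν ≤ s} := by
        show ((P ν).map (fun ω => U ν ω / a ν)) (Set.Iic s) = _
        rw [Measure.map_apply ((hUm ν).div_const (a ν)) measurableSet_Iic]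
        rfl
      simp only [ProbabilityMeasure.coeFn_def, hmap]
      rfl
    have h2 : ((μX' (Set.Iic s) : ℝ≥0) : ℝ) = cdf μX s := by
      simp only [ProbabilityMeasure.coeFn_def]
      rw [show (μX' : Measure ℝ) = μX from rfl,
        cdf_eq_real]
      rfl
    rw [← h2]
    exact key2.congr h1
  -- facts about cdf at nonpositive points
  have hFneg : ∀ s : ℝ, s < 0 → cdf μX s = 0 := by
    intro s hs
    have hz : (fun ν => (P ν {ω | U ν ω / a ν ≤ s}).toReal) =ᶠ[atTop] fun _ => (0:ℝ) := by
      filter_upwards [eventually_gt_atTop 0] with ν hν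
      have hempty : {ω | U ν ω / a ν ≤ s} = (∅ : Set (Ω ν)) := by
        ext ω
        simp only [Set.mem_setOf_eq, Set.mem_empty_iff_false, iff_false, not_le]
        exact hs.trans_le (div_nonneg (hUnn ν hν ω) (hapos ν hν).le)
      rw [hempty]
      simp
    exact (tendsto_nhds_unique ((hIic s).congr' hz) tendsto_const_nhds).symm ▸ rfl
  have hFneg' : ∀ s : ℝ, s ≤ 0 → cdf μX s = 0 := by
    intro s hs
    rcases lt_or_eq_of_le hs with h | rfl
    · exact hFneg s h
    · have h1 : Tendsto (cdf μX) (𝓝[<] (0:ℝ)) (𝓝 (cdf μX 0)) :=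
        (hcdf.tendsto 0).mono_left nhdsWithin_le_nhds
      have h2 : Tendsto (cdf μX) (𝓝[<] (0:ℝ)) (𝓝 0) := by
        apply tendsto_const_nhds.congr'
        filter_upwards [self_mem_nhdsWithin] with x hx
        exact (hFneg x hx).symm
      exact tendsto_nhds_unique h1 h2
  -- Step 3: cdf convergence for T / E T
  have hGn : ∀ s : ℝ, Tendsto (fun ν => (P ν {ω | T ν ω / b ν ≤ s}).toReal)
      atTop (𝓝 (cdf μX s)) := by
    intro s
    rcases lt_or_ge s 0 with hs | hs
    · -- negative s : both sides are zero
      rw [hFneg s hs]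
      apply tendsto_const_nhds.congr'
      filter_upwards [eventually_gt_atTop 0] with ν hν
      have hempty : {ω | T ν ω / b ν ≤ s} = (∅ : Set (Ω ν)) := by
        ext ω
        simp only [Set.mem_setOf_eq, Set.mem_empty_iff_false, iff_false, not_le]
        exact hs.trans_le (div_nonneg (hTnn ν hν ω) (hbpos ν hν).le)
      rw [hempty]
      simp
    · -- s ≥ 0
      rw [Metric.tendsto_nhds]
      intro ε hε
      obtain ⟨δ₀, hδ₀, hδ₀p⟩ := Metric.continuousAt_iff.mp (hcdf.continuousAt (x := s))
        (ε/2) (by linarith)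
      set δ := δ₀ / 4 with hδdef
      have hδpos : 0 < δ := by positivity
      have hcont3 : |cdf μX (s + 3*δ) - cdf μX s| < ε/2 := by
        have hd : dist (s + 3*δ) s < δ₀ := by
          rw [Real.dist_eq, show s + 3*δ - s = 3*δ by ring, abs_of_nonneg (by linarith)]
          linarith
        have := hδ₀p hd
        rwa [Real.dist_eq] at this
      have hcont2 : |cdf μX (s - 2*δ) - cdf μX s| < ε/2 := by
        have hd : dist (s - 2*δ) s < δ₀ := by
          rw [Real.dist_eq, show s - 2*δ - s = -(2*δ) by ring, abs_neg,
            abs_of_nonneg (by linarith)]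
          linarith
        have := hδ₀p hd
        rwa [Real.dist_eq] at this
      -- eventual bounds
      have hMV : ∀ᶠ ν in atTop, ((∫ ω, V ν ω ∂(P ν)) / a ν) / δ < ε/8 := by
        have : Tendsto (fun ν => ((∫ ω, V ν ω ∂(P ν)) / a ν) / δ) atTop (𝓝 0) := by
          simpa using hV.div_const δ
        exact (tendsto_order.mp this).2 (ε/8) (by linarith)
      have hMW : ∀ᶠ ν in atTop, ((∫ ω, W ν ω ∂(P ν)) / a ν) / δ < ε/8 := by
        have : Tendsto (fun ν => ((∫ ω, W ν ω ∂(P ν)) / a ν) / δ) atTop (𝓝 0) := by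
          simpa using hW.div_const δ
        exact (tendsto_order.mp this).2 (ε/8) (by linarith)
      have hE4 : ∀ᶠ ν in atTop, |b ν / a ν - 1| < δ / (s+1) := by
        have := Metric.tendsto_nhds.mp hba (δ / (s+1)) (by positivity)
        filter_upwards [this] with ν hν
        rwa [Real.dist_eq] at hν
      have hE5 : ∀ᶠ ν in atTop,
          |(P ν {ω | U ν ω / a ν ≤ s + 3*δ}).toReal - cdf μX (s + 3*δ)| < ε/8 := by
        have := Metric.tendsto_nhds.mp (hIic (s + 3*δ)) (ε/8) (by linarith)
        filter_upwards [this] with ν hν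
        rwa [Real.dist_eq] at hν
      have hE6 : ∀ᶠ ν in atTop,
          |(P ν {ω | U ν ω / a ν ≤ s - 2*δ}).toReal - cdf μX (s - 2*δ)| < ε/8 := by
        have := Metric.tendsto_nhds.mp (hIic (s - 2*δ)) (ε/8) (by linarith)
        filter_upwards [this] with ν hν
        rwa [Real.dist_eq] at hν
      filter_upwards [eventually_gt_atTop 0, hMV, hMW, hE4, hE5, hE6]
        with ν hν hmv hmw he4 he5 he6
      have ha : 0 < a ν := hapos ν hν
      have hb : 0 < b ν := hbpos ν hν
      -- comparison between s * b and (s ± δ) * a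
      have habs := abs_lt.mp he4
      have hub : s * b ν ≤ (s + δ) * a ν := by
        have h2 : b ν / a ν ≤ 1 + δ/(s+1) := by linarith [habs.2]
        have h3 : s * (b ν / a ν) ≤ s * (1 + δ/(s+1)) := mul_le_mul_of_nonneg_left h2 hs
        have h4 : s * (δ/(s+1)) ≤ δ := by
          rw [mul_div_assoc']
          rw [div_le_iff₀ (by linarith : (0:ℝ) < s + 1)]
          nlinarith
        have h5 : s * (b ν / a ν) ≤ s + δ := by
          rw [mul_add, mul_one] at h3; linarith
        calc s * b ν = s * (b ν / a ν) * a ν := by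
              rw [mul_assoc, div_mul_cancel₀ _ ha.ne']
          _ ≤ (s + δ) * a ν := mul_le_mul_of_nonneg_right h5 ha.le
      have hlbb : (s - δ) * a ν ≤ s * b ν := by
        have h2 : 1 - δ/(s+1) ≤ b ν / a ν := by linarith [habs.1]
        have h3 : s * (1 - δ/(s+1)) ≤ s * (b ν / a ν) := mul_le_mul_of_nonneg_left h2 hs
        have h4 : s * (δ/(s+1)) ≤ δ := by
          rw [mul_div_assoc']
          rw [div_le_iff₀ (by linarith : (0:ℝ) < s + 1)]
          nlinarith
        have h5 : s - δ ≤ s * (b ν / a ν) := by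
          rw [mul_sub, mul_one] at h3; linarith
        calc (s - δ) * a ν ≤ s * (b ν / a ν) * a ν := mul_le_mul_of_nonneg_right h5 ha.le
          _ = s * b ν := by rw [mul_assoc, div_mul_cancel₀ _ ha.ne']
      -- Markov bounds
      have hmarkovV : (P ν {ω | δ * a ν ≤ V ν ω}).toReal
          ≤ ((∫ ω, V ν ω ∂(P ν)) / a ν) / δ := by
        have hm := mul_meas_ge_le_integral_of_nonneg (ae_of_all _ (hVnn ν hν))
          (hVi ν hν) (δ * a ν)
        rw [div_div, mul_comm (a ν) δ, le_div_iff₀ (by positivity : (0:ℝ) < δ * a ν)]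
        rw [measureReal_def] at hm
        linarith [hm]
      have hmarkovW : (P ν {ω | δ * a ν ≤ W ν ω}).toReal
          ≤ ((∫ ω, W ν ω ∂(P ν)) / a ν) / δ := by
        have hm := mul_meas_ge_le_integral_of_nonneg (ae_of_all _ (hWnn ν hν))
          (hWi ν hν) (δ * a ν)
        rw [div_div, mul_comm (a ν) δ, le_div_iff₀ (by positivity : (0:ℝ) < δ * a ν)]
        rw [measureReal_def] at hm
        linarith [hm]
      -- measurability of the relevant sets
      have hmeasT : ∀ c : ℝ, MeasurableSet {ω | c < T ν ω} :=
        fun c => measurableSet_lt measurable_const (hTm ν)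
      have hmeasUV : ∀ c : ℝ, MeasurableSet {ω | c < U ν ω - V ν ω} :=
        fun c => measurableSet_lt measurable_const ((hUm ν).sub (hVm ν))
      have hmeasUW : ∀ c : ℝ, MeasurableSet {ω | c < U ν ω + W ν ω} :=
        fun c => measurableSet_lt measurable_const ((hUm ν).add (hWm ν))
      -- upper bound for P(T/b ≤ s)
      have hupper : (P ν {ω | T ν ω / b ν ≤ s}).toReal
          ≤ (P ν {ω | U ν ω / a ν ≤ s + 3*δ}).toReal
            + (P ν {ω | δ * a ν ≤ V ν ω}).toReal := by
        have hset1 : {ω | T ν ω / b ν ≤ s} = {ω | s * b ν < T ν ω}ᶜ := by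
          ext ω
          simp only [Set.mem_setOf_eq, Set.mem_compl_iff, not_lt]
          rw [div_le_iff₀ hb]
        have hset2 : {ω | U ν ω - V ν ω ≤ s * b ν + δ * a ν}
            ⊆ {ω | U ν ω / a ν ≤ s + 3*δ} ∪ {ω | δ * a ν ≤ V ν ω} := by
          intro ω hω
          rcases le_or_gt (δ * a ν) (V ν ω) with h | h
          · exact Or.inr h
          · left
            rw [Set.mem_setOf_eq, div_le_iff₀ ha]
            have hω' : U ν ω - V ν ω ≤ s * b ν + δ * a ν := hω
            nlinarith [hub]
        have hchain : P ν {ω | T ν ω / b ν ≤ s}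
            ≤ P ν {ω | U ν ω / a ν ≤ s + 3*δ} + P ν {ω | δ * a ν ≤ V ν ω} := by
          rw [hset1, prob_compl_eq_one_sub (hmeasT _)]
          have m1 : P ν {ω | s * b ν + δ * a ν < T ν ω} ≤ P ν {ω | s * b ν < T ν ω} :=
            measure_mono fun ω h => lt_of_le_of_lt (by nlinarith : s * b ν ≤ s * b ν + δ * a ν) h
          have m2 := (hsandwich ν hν (s * b ν + δ * a ν)
            (by nlinarith : (0:ℝ) < s * b ν + δ * a ν)).1
          calc (1:ℝ≥0∞) - P ν {ω | s * b ν < T ν ω}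
              ≤ 1 - P ν {ω | s * b ν + δ * a ν < T ν ω} := tsub_le_tsub_left m1 1
            _ ≤ 1 - P ν {ω | s * b ν + δ * a ν < U ν ω - V ν ω} := tsub_le_tsub_left m2 1
            _ = P ν {ω | U ν ω - V ν ω ≤ s * b ν + δ * a ν} := by
                rw [show {ω | U ν ω - V ν ω ≤ s * b ν + δ * a ν}
                    = {ω | s * b ν + δ * a ν < U ν ω - V ν ω}ᶜ by
                      ext ω; simp [Set.mem_compl_iff, not_lt],
                  prob_compl_eq_one_sub (hmeasUV _)]
            _ ≤ P ν ({ω | U ν ω / a ν ≤ s + 3*δ} ∪ {ω | δ * a ν ≤ V ν ω}) :=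
                measure_mono hset2
            _ ≤ _ := measure_union_le _ _
        have := ENNReal.toReal_mono (by
          exact ENNReal.add_ne_top.mpr ⟨measure_ne_top _ _, measure_ne_top _ _⟩) hchain
        rwa [ENNReal.toReal_add (measure_ne_top _ _) (measure_ne_top _ _)] at this
      -- lower bound for P(T/b ≤ s)
      have hlower : (P ν {ω | U ν ω / a ν ≤ s - 2*δ}).toReal
            - (P ν {ω | δ * a ν ≤ W ν ω}).toReal
          ≤ (P ν {ω | T ν ω / b ν ≤ s}).toReal := by
        rcases eq_or_lt_of_le hs with hs0 | hspos
        · -- s = 0 : left set is empty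
          have hempty : {ω | U ν ω / a ν ≤ s - 2*δ} = (∅ : Set (Ω ν)) := by
            ext ω
            simp only [Set.mem_setOf_eq, Set.mem_empty_iff_false, iff_false, not_le]
            have : s - 2*δ < 0 := by rw [← hs0]; linarith
            exact this.trans_le (div_nonneg (hUnn ν hν ω) ha.le)
          rw [hempty]
          simp only [measure_empty, ENNReal.toReal_zero]
          have h1 : (0:ℝ) ≤ (P ν {ω | T ν ω / b ν ≤ s}).toReal := ENNReal.toReal_nonneg
          have h2 : (0:ℝ) ≤ (P ν {ω | δ * a ν ≤ W ν ω}).toReal := ENNReal.toReal_nonneg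
          linarith
        · have hset1 : {ω | U ν ω / a ν ≤ s - 2*δ} ⊆ {ω | U ν ω ≤ s * b ν - δ * a ν} := by
            intro ω hω
            rw [Set.mem_setOf_eq] at hω ⊢
            rw [div_le_iff₀ ha] at hω
            nlinarith [hlbb]
          have hset2 : {ω | U ν ω ≤ s * b ν - δ * a ν}
              ⊆ {ω | U ν ω + W ν ω ≤ s * b ν} ∪ {ω | δ * a ν ≤ W ν ω} := by
            intro ω hω
            rcases le_or_gt (δ * a ν) (W ν ω) with h | h
            · exact Or.inr h
            · left
              rw [Set.mem_setOf_eq] at hω ⊢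
              linarith
          have hsetT : {ω | T ν ω / b ν ≤ s} = {ω | T ν ω ≤ s * b ν} := by
            ext ω
            simp only [Set.mem_setOf_eq]
            rw [div_le_iff₀ hb]
          have hchain : P ν {ω | U ν ω / a ν ≤ s - 2*δ}
              ≤ P ν {ω | T ν ω / b ν ≤ s} + P ν {ω | δ * a ν ≤ W ν ω} := by
            have m2 := (hsandwich ν hν (s * b ν) (by positivity : (0:ℝ) < s * b ν)).2
            calc P ν {ω | U ν ω / a ν ≤ s - 2*δ}
                ≤ P ν ({ω | U ν ω + W ν ω ≤ s * b ν} ∪ {ω | δ * a ν ≤ W ν ω}) :=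
                  measure_mono (hset1.trans hset2)
              _ ≤ P ν {ω | U ν ω + W ν ω ≤ s * b ν} + P ν {ω | δ * a ν ≤ W ν ω} :=
                  measure_union_le _ _
              _ ≤ P ν {ω | T ν ω / b ν ≤ s} + P ν {ω | δ * a ν ≤ W ν ω} := by
                  apply add_le_add_left
                  rw [hsetT]
                  rw [show {ω | U ν ω + W ν ω ≤ s * b ν}
                      = {ω | s * b ν < U ν ω + W ν ω}ᶜ by
                        ext ω; simp [Set.mem_compl_iff, not_lt],
                    show {ω | T ν ω ≤ s * b ν} = {ω | s * b ν < T ν ω}ᶜ by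
                        ext ω; simp [Set.mem_compl_iff, not_lt],
                    prob_compl_eq_one_sub (hmeasUW _), prob_compl_eq_one_sub (hmeasT _)]
                  exact tsub_le_tsub_left m2 1
          have := ENNReal.toReal_mono (by
            exact ENNReal.add_ne_top.mpr ⟨measure_ne_top _ _, measure_ne_top _ _⟩) hchain
          rw [ENNReal.toReal_add (measure_ne_top _ _) (measure_ne_top _ _)] at this
          linarith
      -- combine
      rw [Real.dist_eq]
      have habs3 := abs_lt.mp hcont3
      have habs2 := abs_lt.mp hcont2
      have habs5 := abs_lt.mp he5
      have habs6 := abs_lt.mp he6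
      rw [abs_lt]
      constructor
      · -- lower: cdf - ε < Gn
        have : cdf μX s - ε < (P ν {ω | U ν ω / a ν ≤ s - 2*δ}).toReal
            - (P ν {ω | δ * a ν ≤ W ν ω}).toReal := by
          have hw := hmarkovW.trans_lt hmw
          linarith
        linarith [hlower]
      · have : (P ν {ω | U ν ω / a ν ≤ s + 3*δ}).toReal
            + (P ν {ω | δ * a ν ≤ V ν ω}).toReal < cdf μX s + ε := by
          have hv := hmarkovV.trans_lt hmv
          linarith
        linarith [hupper]
  -- Step 4: conclude via the cdf convergence lemma
  intro f
  have hmain := tendsto_integral_of_cdf μX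
    (fun ν => (P ν).map (fun ω => T ν ω / b ν))
    (fun ν => Measure.isProbabilityMeasure_map ((hTm ν).div_const (b ν)).aemeasurable)
    (by
      intro s
      have hmap : ∀ ν : ℝ, ((P ν).map (fun ω => T ν ω / b ν)) (Set.Iic s)
          = P ν {ω | T ν ω / b ν ≤ s} := by
        intro ν
        rw [Measure.map_apply ((hTm ν).div_const (b ν)) measurableSet_Iic]
        rfl
      simp only [hmap]
      have := hGn s
      rwa [cdf_eq_real] at this) f
  have heq : ∀ ν : ℝ, ∫ x, f x ∂((P ν).map (fun ω => T ν ω / b ν))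
      = ∫ ω, f (T ν ω / b ν) ∂(P ν) := fun ν =>
    integral_map ((hTm ν).div_const (b ν)).aemeasurable
      f.continuous.measurable.aestronglyMeasurable
  simp only [heq] at hmain
  exact hmain
end

section
/- Fix K ≥ 2 and component sizes L_1 ≥ L_2 ≥ ⋯ ≥ L_K ≥ 1. With π the stationary distribution of the star-shaped activity process, the flow rate out of C_2 is Q(C_2, C_2^c) = π_{(2,1)}(ν)·1 (the only transition out of C_2 is from state (2,1) to 0 at rate 1), and the conductance Φ(C_2)(ν) := Q(C_2, C_2^c)/π(C_2), where π(C_2) = Σ_{l=1}^{L_2} π_{(2,l)}(ν), satisfies Φ(C_2)(ν) = C(L_2,1)·ν / Σ_{l=1}^{L_2} C(L_2,l)·ν^l ~ L_2 · ν^{1−L_2} as ν → ∞. -/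
open Filter Finset

/-- Normalizing constant of the stationary distribution of the star-shaped
activity process:  `π_0(ν) = (1 + Σ_k Σ_{l=1}^{L_k} C(L_k,l) ν^l)⁻¹`. -/
noncomputable def starPi0 (K : ℕ) (L : Fin K → ℕ) (ν : ℝ) : ℝ :=
  (1 + ∑ k : Fin K, ∑ l ∈ Finset.Icc 1 (L k), ((L k).choose l : ℝ) * ν ^ l)⁻¹

/-- Stationary probability `π_{(k,l)}(ν) = π_0(ν)·C(L_k,l)·ν^l` of the
star-shaped activity process. -/
noncomputable def starPi (K : ℕ) (L : Fin K → ℕ) (ν : ℝ) (k : Fin K) (l : ℕ) :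
    ℝ :=
  starPi0 K L ν * ((L k).choose l : ℝ) * ν ^ l

/-- Fix `K ≥ 2` and component sizes `L_1 ≥ L_2 ≥ ⋯ ≥ L_K ≥ 1`.  The
conductance of the second component `C_2`,
`Φ(C_2)(ν) = Q(C_2,C_2^c)/π(C_2) = π_{(2,1)}(ν)·1 / Σ_{l=1}^{L_2} π_{(2,l)}(ν)`,
equals `C(L_2,1)·ν / Σ_{l=1}^{L_2} C(L_2,l)·ν^l` and satisfies
`Φ(C_2)(ν) ~ L_2·ν^{1−L_2}` as `ν → ∞`. -/
theorem conductance_second_component (K : ℕ) (hK : 2 ≤ K)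
    (L : Fin K → ℕ) (hdec : ∀ i j : Fin K, i ≤ j → L j ≤ L i)
    (hpos : ∀ k, 1 ≤ L k) :
    (∀ ν : ℝ, 0 < ν →
      starPi K L ν ⟨1, by omega⟩ 1 * 1 /
          (∑ l ∈ Finset.Icc 1 (L ⟨1, by omega⟩), starPi K L ν ⟨1, by omega⟩ l) =
        ((L ⟨1, by omega⟩).choose 1 : ℝ) * ν /
          ∑ l ∈ Finset.Icc 1 (L ⟨1, by omega⟩),
            ((L ⟨1, by omega⟩).choose l : ℝ) * ν ^ l) ∧
    Tendsto
      (fun ν : ℝ =>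
        (starPi K L ν ⟨1, by omega⟩ 1 * 1 /
            (∑ l ∈ Finset.Icc 1 (L ⟨1, by omega⟩), starPi K L ν ⟨1, by omega⟩ l)) /
          ((L ⟨1, by omega⟩ : ℝ) * ν ^ ((1 : ℤ) - (L ⟨1, by omega⟩ : ℤ))))
      atTop (nhds 1) := by
  have hi : (1 : ℕ) < K := by omega
  set i : Fin K := ⟨1, hi⟩ with hidef
  set M := L i with hMdef
  have hM1 : 1 ≤ M := hpos i
  have hMone : 1 ∈ Finset.Icc 1 M := Finset.mem_Icc.mpr ⟨le_refl 1, hM1⟩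
  have hMmem : M ∈ Finset.Icc 1 M := Finset.mem_Icc.mpr ⟨hM1, le_refl M⟩
  have hchoose1 : (M.choose 1 : ℝ) = (M : ℝ) := by simp
  have hMRpos : (0 : ℝ) < (M : ℝ) := by exact_mod_cast hM1
  have hsumpos : ∀ ν : ℝ, 0 < ν →
      0 < ∑ l ∈ Finset.Icc 1 M, (M.choose l : ℝ) * ν ^ l := by
    intro ν hν
    refine Finset.sum_pos' (fun l hl => by positivity) ⟨1, hMone, ?_⟩
    rw [hchoose1]
    positivity
  have hπ0 : ∀ ν : ℝ, 0 < ν → 0 < starPi0 K L ν := by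
    intro ν hν
    unfold starPi0
    have : (0:ℝ) ≤ ∑ k : Fin K, ∑ l ∈ Finset.Icc 1 (L k), ((L k).choose l : ℝ) * ν ^ l := by
      apply Finset.sum_nonneg
      intro k _
      apply Finset.sum_nonneg
      intro l _
      positivity
    positivity
  have h1 : ∀ ν : ℝ, 0 < ν →
      starPi K L ν i 1 * 1 /
          (∑ l ∈ Finset.Icc 1 M, starPi K L ν i l) =
        (M.choose 1 : ℝ) * ν /
          ∑ l ∈ Finset.Icc 1 M, (M.choose l : ℝ) * ν ^ l := by
    intro ν hν
    simp only [starPi, ← hMdef, mul_assoc, mul_one, pow_one]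
    rw [← Finset.mul_sum, mul_div_mul_left _ _ (ne_of_gt (hπ0 ν hν))]
  refine ⟨h1, ?_⟩
  set g : ℝ → ℝ := fun ν => ∑ l ∈ Finset.Icc 1 M, (M.choose l : ℝ) * ν ^ ((l : ℤ) - (M : ℤ))
    with hgdef
  have hg : Tendsto g atTop (nhds 1) := by
    have h := tendsto_finset_sum (Finset.Icc 1 M)
      (f := fun l (ν : ℝ) => (M.choose l : ℝ) * ν ^ ((l : ℤ) - (M : ℤ)))
      (a := fun l => if l = M then (1 : ℝ) else 0) (x := atTop) ?_
    · have : (∑ l ∈ Finset.Icc 1 M, if l = M then (1 : ℝ) else 0) = 1 := by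
        rw [Finset.sum_ite_eq' (Finset.Icc 1 M) M (fun _ => (1:ℝ))]
        simp [hMmem]
      rw [this] at h
      exact h
    · intro l hl
      rcases eq_or_lt_of_le (Finset.mem_Icc.mp hl).2 with h | h
      · subst h
        simp only [if_pos rfl, Nat.choose_self, Nat.cast_one, sub_self, one_mul]
        simpa using tendsto_const_nhds (α := ℝ) (f := atTop (α := ℝ)) (a := (1:ℝ))
      · have hne : l ≠ M := Nat.ne_of_lt h
        simp only [hne, if_false]
        have hneg : (l : ℤ) - (M : ℤ) < 0 := by
          have : (l : ℤ) < (M : ℤ) := by exact_mod_cast h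
          omega
        have := (tendsto_zpow_atTop_zero hneg).const_mul (M.choose l : ℝ)
        simpa using this
  have key : ∀ᶠ ν : ℝ in atTop,
      (starPi K L ν i 1 * 1 /
          (∑ l ∈ Finset.Icc 1 M, starPi K L ν i l)) /
        ((M : ℝ) * ν ^ ((1 : ℤ) - (M : ℤ))) = (g ν)⁻¹ := by
    filter_upwards [eventually_gt_atTop (0:ℝ)] with ν hν
    rw [h1 ν hν, hchoose1]
    have hν0 : ν ≠ 0 := ne_of_gt hν
    have hS := (hsumpos ν hν).ne'
    have hgν : g ν = (∑ l ∈ Finset.Icc 1 M, (M.choose l : ℝ) * ν ^ l) * ν ^ (-(M : ℤ)) := by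
      rw [Finset.sum_mul]
      refine Finset.sum_congr rfl fun l hl => ?_
      rw [mul_assoc, ← zpow_natCast ν l, ← zpow_add₀ hν0, sub_eq_add_neg]
    rw [hgν, mul_inv, zpow_neg, inv_inv, zpow_natCast]
    have h1M : ((1 : ℤ) - (M : ℤ)) = 1 + (-(M : ℤ)) := by ring
    rw [h1M, zpow_add₀ hν0, zpow_one, zpow_neg, zpow_natCast]
    field_simp
  refine Tendsto.congr' (Filter.EventuallyEq.symm key) ?_
  simpa using hg.inv₀ one_ne_zero
end
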